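/- arXiv:1912.13421 — 4 statements merged into one kernel-verified Lean document; each statement's English description precedes it below -/
import Mathlib

section
/- Under the above setup, the squared bias of the MNLS estimator satisfies, for every m: B² = θᵀ(I − Σ̂†Σ̂)Σ(I − Σ̂†Σ̂)θ ≤ 2‖θ‖² (λ_{m+1} + ‖Σ_{j=1}^m √λⱼ (P̂ⱼ − Pⱼ)‖²) (‖Σ_{j=1}^m (P̂ⱼ − Pⱼ)‖² + Σ_{j=m+1}^d ‖Pⱼθ‖² / ‖θ‖²). -/
open Matrix Finset

/-- Operator (spectral) norm of a real matrix. -/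
noncomputable def opNorm {m n : Type*} [Fintype m] [Fintype n] [DecidableEq n]
    (A : Matrix m n ℝ) : ℝ :=
  ‖LinearMap.toContinuousLinearMap (Matrix.toEuclideanLin A)‖

section helpers
variable {d : ℕ}

lemma nsq_nonneg (v : Fin d → ℝ) : 0 ≤ v ⬝ᵥ v :=
  Finset.sum_nonneg fun _ _ => mul_self_nonneg _

lemma norm_symm_sq (v : Fin d → ℝ) :
    ‖(WithLp.equiv 2 (Fin d → ℝ)).symm v‖ ^ 2 = v ⬝ᵥ v := by
  rw [EuclideanSpace.norm_eq, Real.sq_sqrt (by positivity)]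
  simp [dotProduct, sq]

lemma nsq_mulVec_le (M : Matrix (Fin d) (Fin d) ℝ) (x : Fin d → ℝ) :
    (M *ᵥ x) ⬝ᵥ (M *ᵥ x) ≤ opNorm M ^ 2 * (x ⬝ᵥ x) := by
  have h := (LinearMap.toContinuousLinearMap (Matrix.toEuclideanLin M)).le_opNorm
      ((WithLp.equiv 2 (Fin d → ℝ)).symm x)
  have h2 : (LinearMap.toContinuousLinearMap (Matrix.toEuclideanLin M))
      ((WithLp.equiv 2 (Fin d → ℝ)).symm x)
      = (WithLp.equiv 2 (Fin d → ℝ)).symm (M *ᵥ x) := by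
    simp [Matrix.toEuclideanLin_apply_piLp_toLp M x]
  rw [h2] at h
  calc (M *ᵥ x) ⬝ᵥ (M *ᵥ x) = ‖(WithLp.equiv 2 (Fin d → ℝ)).symm (M *ᵥ x)‖ ^ 2 :=
        (norm_symm_sq _).symm
    _ ≤ (opNorm M * ‖(WithLp.equiv 2 (Fin d → ℝ)).symm x‖) ^ 2 := by
        rw [sq, sq]; exact mul_self_le_mul_self (norm_nonneg _) h
    _ = opNorm M ^ 2 * (x ⬝ᵥ x) := by rw [mul_pow, norm_symm_sq]

lemma dot_mulVec_left (M : Matrix (Fin d) (Fin d) ℝ) (u w : Fin d → ℝ) :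
    (M *ᵥ u) ⬝ᵥ w = u ⬝ᵥ (Mᵀ *ᵥ w) := by
  rw [dotProduct_comm, dotProduct_mulVec, ← mulVec_transpose, dotProduct_comm]

lemma pyth (u w : Fin d → ℝ) (h : u ⬝ᵥ w = 0) :
    (u + w) ⬝ᵥ (u + w) = u ⬝ᵥ u + w ⬝ᵥ w := by
  have h2 : w ⬝ᵥ u = 0 := by rw [dotProduct_comm]; exact h
  simp only [add_dotProduct, dotProduct_add, h, h2]
  ring

lemma nsq_sub_le (v w : Fin d → ℝ) :
    (v - w) ⬝ᵥ (v - w) ≤ 2 * (v ⬝ᵥ v) + 2 * (w ⬝ᵥ w) := by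
  have h := nsq_nonneg (v + w)
  have e1 : (v + w) ⬝ᵥ (v + w) = v ⬝ᵥ v + v ⬝ᵥ w + w ⬝ᵥ v + w ⬝ᵥ w := by
    simp only [add_dotProduct, dotProduct_add]; ring
  have e2 : (v - w) ⬝ᵥ (v - w) = v ⬝ᵥ v - v ⬝ᵥ w - w ⬝ᵥ v + w ⬝ᵥ w := by
    simp only [sub_dotProduct, dotProduct_sub]; ring
  linarith

lemma nsq_proj_le (Q : Matrix (Fin d) (Fin d) ℝ) (hs : Qᵀ = Q) (hi : Q * Q = Q)
    (z : Fin d → ℝ) : (Q *ᵥ z) ⬝ᵥ (Q *ᵥ z) ≤ z ⬝ᵥ z := by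
  have h0 : (Q *ᵥ z) ⬝ᵥ (z - Q *ᵥ z) = 0 := by
    rw [dot_mulVec_left, hs, Matrix.mulVec_sub, mulVec_mulVec, hi, sub_self, dotProduct_zero]
  have h := pyth (Q *ᵥ z) (z - Q *ᵥ z) h0
  have e : Q *ᵥ z + (z - Q *ᵥ z) = z := by abel
  rw [e] at h
  linarith [nsq_nonneg (z - Q *ᵥ z)]

lemma sum_mulVec' (s : Finset ℕ) (M : ℕ → Matrix (Fin d) (Fin d) ℝ) (v : Fin d → ℝ) :
    (∑ j ∈ s, M j) *ᵥ v = ∑ j ∈ s, M j *ᵥ v := by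
  induction s using Finset.cons_induction with
  | empty => simp
  | cons a s ha ih => rw [Finset.sum_cons, Finset.sum_cons, Matrix.add_mulVec, ih]

lemma mulVec_sum' (s : Finset ℕ) (M : Matrix (Fin d) (Fin d) ℝ) (f : ℕ → Fin d → ℝ) :
    M *ᵥ (∑ j ∈ s, f j) = ∑ j ∈ s, M *ᵥ f j := by
  induction s using Finset.cons_induction with
  | empty => simp
  | cons a s ha ih => rw [Finset.sum_cons, Finset.sum_cons, Matrix.mulVec_add, ih]

lemma sum_dotProduct' (s : Finset ℕ) (f : ℕ → Fin d → ℝ) (w : Fin d → ℝ) :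
    (∑ j ∈ s, f j) ⬝ᵥ w = ∑ j ∈ s, f j ⬝ᵥ w := by
  induction s using Finset.cons_induction with
  | empty => simp
  | cons a s ha ih => rw [Finset.sum_cons, Finset.sum_cons, add_dotProduct, ih]

lemma dotProduct_sum' (s : Finset ℕ) (w : Fin d → ℝ) (f : ℕ → Fin d → ℝ) :
    w ⬝ᵥ (∑ j ∈ s, f j) = ∑ j ∈ s, w ⬝ᵥ f j := by
  induction s using Finset.cons_induction with
  | empty => simp
  | cons a s ha ih => rw [Finset.sum_cons, Finset.sum_cons, dotProduct_add, ih]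

lemma nsq_sum_orth (s : Finset ℕ) (f : ℕ → Fin d → ℝ)
    (h : ∀ i ∈ s, ∀ j ∈ s, i ≠ j → f i ⬝ᵥ f j = 0) :
    (∑ j ∈ s, f j) ⬝ᵥ (∑ j ∈ s, f j) = ∑ j ∈ s, f j ⬝ᵥ f j := by
  rw [sum_dotProduct']
  refine Finset.sum_congr rfl fun i hi => ?_
  rw [dotProduct_sum', Finset.sum_eq_single i]
  · intro j hj hne
    exact h i hi j hj (Ne.symm hne)
  · intro hni; exact absurd hi hni

end helpers

/-- Upper bound on the squared bias of the MNLS estimator: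
`B² = θᵀ(I − Σ̂†Σ̂)Σ(I − Σ̂†Σ̂)θ
 ≤ 2‖θ‖² (λ_{m+1} + ‖Σ_{j≤m} √λⱼ (P̂ⱼ − Pⱼ)‖²)
      (‖Σ_{j≤m} (P̂ⱼ − Pⱼ)‖² + Σ_{j>m} ‖Pⱼθ‖²/‖θ‖²)`. -/
theorem mnls_bias_upper_bound {d : ℕ} (n m : ℕ) (hmn : m ≤ n) (hmd : m < d)
    (P Phat : ℕ → Matrix (Fin d) (Fin d) ℝ) (lam : ℕ → ℝ) (θ : Fin d → ℝ)
    (hθ : θ ≠ 0)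
    -- spectral decomposition of the population covariance Σ :
    (hPsymm : ∀ j < d, (P j)ᵀ = P j)
    (hPidem : ∀ j < d, P j * P j = P j)
    (hPorth : ∀ i < d, ∀ j < d, i ≠ j → P i * P j = 0)
    (hPsum : ∑ j ∈ range d, P j = 1)
    (hPrank : ∀ j < d, (P j).trace = 1)
    (hlam_mono : ∀ i j, i ≤ j → j < d → lam j ≤ lam i)
    (hlam_nonneg : ∀ j < d, 0 ≤ lam j)
    -- eigen-projectors of the sample covariance, with Σ̂†Σ̂ = Σ_{j≤n} P̂ⱼ :
    (hPhsymm : ∀ j < n, (Phat j)ᵀ = Phat j)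
    (hPhidem : ∀ j < n, Phat j * Phat j = Phat j)
    (hPhorth : ∀ i < n, ∀ j < n, i ≠ j → Phat i * Phat j = 0) :
    θ ⬝ᵥ (((1 - ∑ j ∈ range n, Phat j)
            * (∑ j ∈ range d, lam j • P j)
            * (1 - ∑ j ∈ range n, Phat j)).mulVec θ)
      ≤ 2 * (∑ i, θ i ^ 2)
        * (lam m + opNorm (∑ j ∈ range m, Real.sqrt (lam j) • (Phat j - P j)) ^ 2)
        * (opNorm (∑ j ∈ range m, (Phat j - P j)) ^ 2
            + (∑ j ∈ Ico m d, ∑ i, ((P j).mulVec θ) i ^ 2) / (∑ i, θ i ^ 2)) := by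
  set N : Matrix (Fin d) (Fin d) ℝ := ∑ j ∈ range n, Phat j with hNdef
  set Q : Matrix (Fin d) (Fin d) ℝ := 1 - N with hQdef
  set A : Matrix (Fin d) (Fin d) ℝ :=
    ∑ j ∈ range m, Real.sqrt (lam j) • (Phat j - P j) with hAdef
  set D : Matrix (Fin d) (Fin d) ℝ := ∑ j ∈ range m, (Phat j - P j) with hDdef
  set Sm : Matrix (Fin d) (Fin d) ℝ := ∑ j ∈ range m, Real.sqrt (lam j) • P j with hSmdef
  set R : Matrix (Fin d) (Fin d) ℝ := ∑ j ∈ Ico m d, Real.sqrt (lam j) • P j with hRdef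
  set H : Matrix (Fin d) (Fin d) ℝ := ∑ j ∈ range d, Real.sqrt (lam j) • P j with hHdef
  set y : Fin d → ℝ := Q *ᵥ θ with hydef
  set r : Fin d → ℝ := ∑ j ∈ Ico m d, P j *ᵥ θ with hrdef
  -- basic projector algebra
  have hPhatN : ∀ j < n, Phat j * N = Phat j := by
    intro j hj
    rw [hNdef, Matrix.mul_sum, Finset.sum_eq_single j]
    · exact hPhidem j hj
    · intro i hi hne; exact hPhorth j hj i (mem_range.mp hi) (Ne.symm hne)
    · intro hni; exact absurd (mem_range.mpr hj) hni
  have hNPhat : ∀ j < n, N * Phat j = Phat j := by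
    intro j hj
    rw [hNdef, Finset.sum_mul, Finset.sum_eq_single j]
    · exact hPhidem j hj
    · intro i hi hne; exact hPhorth i (mem_range.mp hi) j hj hne
    · intro hni; exact absurd (mem_range.mpr hj) hni
  have hNN : N * N = N := by
    nth_rewrite 1 [hNdef]
    rw [Finset.sum_mul]
    exact Finset.sum_congr rfl fun j hj => hPhatN j (mem_range.mp hj)
  have hNsymm : Nᵀ = N := by
    rw [hNdef, Matrix.transpose_sum]
    exact Finset.sum_congr rfl fun j hj => hPhsymm j (mem_range.mp hj)
  have hQsymm : Qᵀ = Q := by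
    rw [hQdef, Matrix.transpose_sub, Matrix.transpose_one, hNsymm]
  have hQQ : Q * Q = Q := by
    rw [hQdef, sub_mul, one_mul, mul_sub, mul_one, hNN, sub_self, sub_zero]
  have hQPhat : ∀ j < n, Q * Phat j = 0 := by
    intro j hj; rw [hQdef, sub_mul, one_mul, hNPhat j hj, sub_self]
  have hPhatQ : ∀ j < n, Phat j * Q = 0 := by
    intro j hj; rw [hQdef, mul_sub, mul_one, hPhatN j hj, sub_self]
  -- decomposition of H
  have hsplit : H = Sm + R := by
    simp only [hHdef, hSmdef, hRdef, Finset.range_eq_Ico]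
    exact (Finset.sum_Ico_consecutive _ (Nat.zero_le m) (le_of_lt hmd)).symm
  have hHH : H * H = ∑ j ∈ range d, lam j • P j := by
    rw [hHdef, Finset.sum_mul_sum]
    refine Finset.sum_congr rfl fun i hi => ?_
    rw [Finset.sum_eq_single i]
    · rw [Matrix.smul_mul, Matrix.mul_smul, smul_smul,
        Real.mul_self_sqrt (hlam_nonneg i (mem_range.mp hi)), hPidem i (mem_range.mp hi)]
    · intro j hj hne
      rw [Matrix.smul_mul, Matrix.mul_smul,
        hPorth i (mem_range.mp hi) j (mem_range.mp hj) (Ne.symm hne), smul_zero, smul_zero]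
    · intro hni; exact absurd hi hni
  have hHsymm : Hᵀ = H := by
    rw [hHdef, Matrix.transpose_sum]
    refine Finset.sum_congr rfl fun j hj => ?_
    rw [Matrix.transpose_smul, hPsymm j (mem_range.mp hj)]
  have hSmsymm : Smᵀ = Sm := by
    rw [hSmdef, Matrix.transpose_sum]
    refine Finset.sum_congr rfl fun j hj => ?_
    rw [Matrix.transpose_smul, hPsymm j (lt_trans (mem_range.mp hj) hmd)]
  have hSmR : Sm * R = 0 := by
    rw [hSmdef, hRdef, Finset.sum_mul_sum]
    refine Finset.sum_eq_zero fun i hi => Finset.sum_eq_zero fun j hj => ?_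
    have hi' : i < m := mem_range.mp hi
    have hj' := mem_Ico.mp hj
    rw [Matrix.smul_mul, Matrix.mul_smul,
      hPorth i (lt_trans hi' hmd) j hj'.2 (by omega), smul_zero, smul_zero]
  have hAQ : A * Q = -(Sm * Q) := by
    rw [hAdef, hSmdef, Finset.sum_mul, Finset.sum_mul, ← Finset.sum_neg_distrib]
    refine Finset.sum_congr rfl fun j hj => ?_
    have hjn : j < n := lt_of_lt_of_le (mem_range.mp hj) hmn
    rw [Matrix.smul_mul, Matrix.smul_mul, sub_mul, hPhatQ j hjn, zero_sub, smul_neg]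
  have hQD : Q * D = -(Q * ∑ j ∈ range m, P j) := by
    rw [hDdef, Matrix.mul_sum, Matrix.mul_sum, ← Finset.sum_neg_distrib]
    refine Finset.sum_congr rfl fun j hj => ?_
    have hjn : j < n := lt_of_lt_of_le (mem_range.mp hj) hmn
    rw [mul_sub, hQPhat j hjn, zero_sub]
  -- LHS as squared norm
  have hfact : Q * (∑ j ∈ range d, lam j • P j) * Q = (H * Q)ᵀ * (H * Q) := by
    rw [← hHH, Matrix.transpose_mul, hQsymm, hHsymm]
    simp only [Matrix.mul_assoc]
  have hLHS : θ ⬝ᵥ ((Q * (∑ j ∈ range d, lam j • P j) * Q) *ᵥ θ)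
      = (H *ᵥ y) ⬝ᵥ (H *ᵥ y) := by
    rw [hfact, ← Matrix.mulVec_mulVec, ← dot_mulVec_left, ← Matrix.mulVec_mulVec, ← hydef]
  have hsplitvec : H *ᵥ y = Sm *ᵥ y + R *ᵥ y := by rw [hsplit, Matrix.add_mulVec]
  have horth : (Sm *ᵥ y) ⬝ᵥ (R *ᵥ y) = 0 := by
    rw [dot_mulVec_left, hSmsymm, Matrix.mulVec_mulVec, hSmR, Matrix.zero_mulVec,
      dotProduct_zero]
  have hpyth1 : (H *ᵥ y) ⬝ᵥ (H *ᵥ y)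
      = (Sm *ᵥ y) ⬝ᵥ (Sm *ᵥ y) + (R *ᵥ y) ⬝ᵥ (R *ᵥ y) := by
    rw [hsplitvec]; exact pyth _ _ horth
  have hSmy : Sm *ᵥ y = -(A *ᵥ y) := by
    have h : A *ᵥ y = -(Sm *ᵥ y) := by
      rw [hydef, Matrix.mulVec_mulVec, Matrix.mulVec_mulVec, hAQ, Matrix.neg_mulVec]
    rw [h, neg_neg]
  have hA_bound : (Sm *ᵥ y) ⬝ᵥ (Sm *ᵥ y) ≤ opNorm A ^ 2 * (y ⬝ᵥ y) := by
    rw [hSmy, neg_dotProduct, dotProduct_neg, neg_neg]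
    exact nsq_mulVec_le A y
  have hPy_sum : ∀ z : Fin d → ℝ,
      ∑ j ∈ range d, (P j *ᵥ z) ⬝ᵥ (P j *ᵥ z) = z ⬝ᵥ z := by
    intro z
    have h1 : ∀ j ∈ range d, (P j *ᵥ z) ⬝ᵥ (P j *ᵥ z) = z ⬝ᵥ (P j *ᵥ z) := by
      intro j hj
      rw [dot_mulVec_left, hPsymm j (mem_range.mp hj), Matrix.mulVec_mulVec,
        hPidem j (mem_range.mp hj)]
    rw [Finset.sum_congr rfl h1, ← dotProduct_sum', ← sum_mulVec', hPsum, Matrix.one_mulVec]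
  have hsub_sum : ∀ z : Fin d → ℝ,
      ∑ j ∈ Ico m d, (P j *ᵥ z) ⬝ᵥ (P j *ᵥ z) ≤ z ⬝ᵥ z := by
    intro z
    rw [← hPy_sum z]
    refine Finset.sum_le_sum_of_subset_of_nonneg ?_ fun i _ _ => nsq_nonneg _
    intro x hx; rw [Finset.mem_range]; exact (mem_Ico.mp hx).2
  have hRy : R *ᵥ y = ∑ j ∈ Ico m d, Real.sqrt (lam j) • (P j *ᵥ y) := by
    rw [hRdef, sum_mulVec']
    exact Finset.sum_congr rfl fun j hj => Matrix.smul_mulVec _ _ _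
  have hR_bound : (R *ᵥ y) ⬝ᵥ (R *ᵥ y) ≤ lam m * (y ⬝ᵥ y) := by
    rw [hRy, nsq_sum_orth]
    · calc ∑ j ∈ Ico m d,
            (Real.sqrt (lam j) • (P j *ᵥ y)) ⬝ᵥ (Real.sqrt (lam j) • (P j *ᵥ y))
          = ∑ j ∈ Ico m d, lam j * ((P j *ᵥ y) ⬝ᵥ (P j *ᵥ y)) := by
            refine Finset.sum_congr rfl fun j hj => ?_
            rw [smul_dotProduct, dotProduct_smul, smul_eq_mul, smul_eq_mul, ← mul_assoc,
              Real.mul_self_sqrt (hlam_nonneg j (mem_Ico.mp hj).2)]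
        _ ≤ ∑ j ∈ Ico m d, lam m * ((P j *ᵥ y) ⬝ᵥ (P j *ᵥ y)) :=
            Finset.sum_le_sum fun j hj => mul_le_mul_of_nonneg_right
              (hlam_mono m j (mem_Ico.mp hj).1 (mem_Ico.mp hj).2) (nsq_nonneg _)
        _ = lam m * ∑ j ∈ Ico m d, ((P j *ᵥ y) ⬝ᵥ (P j *ᵥ y)) := (Finset.mul_sum _ _ _).symm
        _ ≤ lam m * (y ⬝ᵥ y) := mul_le_mul_of_nonneg_left (hsub_sum y) (hlam_nonneg m hmd)
    · intro i hi j hj hne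
      rw [smul_dotProduct, dotProduct_smul, dot_mulVec_left, hPsymm i (mem_Ico.mp hi).2,
        Matrix.mulVec_mulVec, hPorth i (mem_Ico.mp hi).2 j (mem_Ico.mp hj).2 hne,
        Matrix.zero_mulVec, dotProduct_zero, smul_zero, smul_zero]
  have hQ1 : Q * (∑ j ∈ Ico m d, P j) - Q * D = Q := by
    rw [hQD, sub_neg_eq_add, ← Matrix.mul_add]
    have h : (∑ j ∈ Ico m d, P j) + ∑ j ∈ range m, P j = 1 := by
      rw [add_comm, ← hPsum]
      simp only [Finset.range_eq_Ico]
      exact Finset.sum_Ico_consecutive _ (Nat.zero_le m) (le_of_lt hmd)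
    rw [h, mul_one]
  have hy_eq : y = Q *ᵥ (r - D *ᵥ θ) := by
    rw [hrdef, Matrix.mulVec_sub, mulVec_sum']
    have e1 : ∑ j ∈ Ico m d, Q *ᵥ (P j *ᵥ θ) = (Q * ∑ j ∈ Ico m d, P j) *ᵥ θ := by
      rw [Matrix.mul_sum, sum_mulVec']
      exact Finset.sum_congr rfl fun j _ => Matrix.mulVec_mulVec _ _ _
    rw [e1, Matrix.mulVec_mulVec, ← Matrix.sub_mulVec, hQ1, hydef]
  have hy_bound : y ⬝ᵥ y ≤ 2 * (opNorm D ^ 2 * (θ ⬝ᵥ θ)) + 2 * (r ⬝ᵥ r) := by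
    have h1 : y ⬝ᵥ y ≤ (r - D *ᵥ θ) ⬝ᵥ (r - D *ᵥ θ) := by
      rw [hy_eq]; exact nsq_proj_le Q hQsymm hQQ _
    have h2 := nsq_sub_le r (D *ᵥ θ)
    have h3 := nsq_mulVec_le D θ
    linarith
  have hr_eq : r ⬝ᵥ r = ∑ j ∈ Ico m d, (P j *ᵥ θ) ⬝ᵥ (P j *ᵥ θ) := by
    rw [hrdef]
    refine nsq_sum_orth _ _ fun i hi j hj hne => ?_
    rw [dot_mulVec_left, hPsymm i (mem_Ico.mp hi).2, Matrix.mulVec_mulVec,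
      hPorth i (mem_Ico.mp hi).2 j (mem_Ico.mp hj).2 hne, Matrix.zero_mulVec, dotProduct_zero]
  have hθsq : (∑ i, θ i ^ 2) = θ ⬝ᵥ θ := by simp [dotProduct, sq]
  have hθpos : 0 < θ ⬝ᵥ θ := by
    have hne : θ ⬝ᵥ θ ≠ 0 := fun h => hθ (dotProduct_self_eq_zero.mp h)
    exact lt_of_le_of_ne (nsq_nonneg θ) (Ne.symm hne)
  have hsum_eq : ∑ j ∈ Ico m d, ∑ i, ((P j) *ᵥ θ) i ^ 2 = r ⬝ᵥ r := by
    rw [hr_eq]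
    exact Finset.sum_congr rfl fun j _ => by simp [dotProduct, sq]
  have hopA : 0 ≤ lam m + opNorm A ^ 2 := add_nonneg (hlam_nonneg m hmd) (sq_nonneg _)
  have hmain : (H *ᵥ y) ⬝ᵥ (H *ᵥ y) ≤ (lam m + opNorm A ^ 2) * (y ⬝ᵥ y) := by
    rw [hpyth1, add_mul]
    linarith [hA_bound, hR_bound]
  calc θ ⬝ᵥ ((Q * (∑ j ∈ range d, lam j • P j) * Q) *ᵥ θ)
      = (H *ᵥ y) ⬝ᵥ (H *ᵥ y) := hLHS
    _ ≤ (lam m + opNorm A ^ 2) * (y ⬝ᵥ y) := hmain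
    _ ≤ (lam m + opNorm A ^ 2) * (2 * (opNorm D ^ 2 * (θ ⬝ᵥ θ)) + 2 * (r ⬝ᵥ r)) :=
        mul_le_mul_of_nonneg_left hy_bound hopA
    _ = 2 * (∑ i, θ i ^ 2) * (lam m + opNorm A ^ 2)
        * (opNorm D ^ 2 + (∑ j ∈ Ico m d, ∑ i, ((P j) *ᵥ θ) i ^ 2) / (∑ i, θ i ^ 2)) := by
        rw [hsum_eq, hθsq]
        field_simp
end

section
/- (Eigenprojector perturbation bound) Let Σ = Σ_{j=1}^d λⱼ Pⱼ and Σ̃ = Σ_{j=1}^d λ̃ⱼ P̃ⱼ be spectral decompositions of two d × d real symmetric matrices with eigenvalues in decreasing order and rank-one projectors onto eigenvectors; assume the eigenvalues of Σ near index j are simple. Define the spectral gaps g_j = λⱼ − λ_{j+1}, ḡ₁ = g₁, and ḡⱼ = min(g_{j−1}, gⱼ) for j ≥ 2. Then ‖P̃ⱼ − Pⱼ‖ ≤ 4 ‖Σ̃ − Σ‖ / ḡⱼ, where ‖·‖ denotes the operator norm. -/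
open Matrix Finset

set_option maxHeartbeats 1000000
set_option synthInstance.maxHeartbeats 400000

namespace KLaux

variable {d : ℕ}

local notation "E" => EuclideanSpace ℝ (Fin d)
local notation "H" => EuclideanSpace ℝ (Fin d) →L[ℝ] EuclideanSpace ℝ (Fin d)

lemma norm_star' (f : H) : ‖star f‖ = ‖f‖ := by
  rw [ContinuousLinearMap.star_eq_adjoint]
  exact LinearIsometryEquiv.norm_map ContinuousLinearMap.adjoint f

lemma inner_move (f : H) (hf : star f = f) (x y : E) :
    (inner ℝ (f x) y : ℝ) = inner ℝ x (f y) := by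
  conv_lhs => rw [← hf, ContinuousLinearMap.star_eq_adjoint]
  exact ContinuousLinearMap.adjoint_inner_left f y x

lemma inner_proj_self (f : H) (hf : star f = f) (hidem : f * f = f) (x : E) :
    (inner ℝ x (f x) : ℝ) = ‖f x‖ ^ 2 := by
  have h1 : f x = f (f x) := by
    conv_lhs => rw [← hidem]
    rfl
  conv_lhs => rw [h1]
  rw [← inner_move f hf, real_inner_self_eq_norm_sq]

lemma proj_apply_le (f : H) (hf : star f = f) (hidem : f * f = f) (x : E) :
    ‖f x‖ ≤ ‖x‖ := by
  have h1 : ‖f x‖ ^ 2 ≤ ‖x‖ * ‖f x‖ := by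
    rw [← inner_proj_self f hf hidem x]
    exact real_inner_le_norm x (f x)
  rcases eq_or_lt_of_le (norm_nonneg (f x)) with h | h
  · rw [← h]; exact norm_nonneg x
  · nlinarith

lemma proj_norm_le_one (f : H) (hf : star f = f) (hidem : f * f = f) : ‖f‖ ≤ 1 := by
  refine f.opNorm_le_bound zero_le_one fun x => ?_
  simpa using proj_apply_le f hf hidem x

section family

variable (s : Finset ℕ) (p : ℕ → EuclideanSpace ℝ (Fin d) →L[ℝ] EuclideanSpace ℝ (Fin d))

lemma sum_proj_star (hsym : ∀ k ∈ s, star (p k) = p k) :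
    star (∑ k ∈ s, p k) = ∑ k ∈ s, p k := by
  have : ∀ t : Finset ℕ, star (∑ k ∈ t, p k) = ∑ k ∈ t, star (p k) := by
    intro t
    induction t using Finset.cons_induction with
    | empty => exact star_zero (EuclideanSpace ℝ (Fin d) →L[ℝ] EuclideanSpace ℝ (Fin d))
    | cons a t ha ih => rw [Finset.sum_cons, Finset.sum_cons, ← ih]; exact star_add (p a) (∑ x ∈ t, p x)

  rw [this s]; exact Finset.sum_congr rfl hsym

lemma sum_proj_idem (hidem : ∀ k ∈ s, p k * p k = p k)
    (horth : ∀ i ∈ s, ∀ k ∈ s, i ≠ k → p i * p k = 0) :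
    (∑ k ∈ s, p k) * (∑ k ∈ s, p k) = ∑ k ∈ s, p k := by
  rw [Finset.sum_mul_sum]
  refine Finset.sum_congr rfl fun i hi => ?_
  rw [Finset.sum_eq_single i (fun b hb hne => horth i hi b hb (Ne.symm hne))
    (fun h => absurd hi h)]
  exact hidem i hi

lemma sum_proj_sq (hsym : ∀ k ∈ s, star (p k) = p k) (hidem : ∀ k ∈ s, p k * p k = p k)
    (horth : ∀ i ∈ s, ∀ k ∈ s, i ≠ k → p i * p k = 0) (x : EuclideanSpace ℝ (Fin d)) :
    ∑ k ∈ s, ‖p k x‖ ^ 2 = ‖(∑ k ∈ s, p k) x‖ ^ 2 := by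
  calc ∑ k ∈ s, ‖p k x‖ ^ 2 = ∑ k ∈ s, (inner ℝ x (p k x) : ℝ) :=
        Finset.sum_congr rfl fun k hk => (inner_proj_self _ (hsym k hk) (hidem k hk) x).symm
    _ = inner ℝ x ((∑ k ∈ s, p k) x) := by rw [ContinuousLinearMap.sum_apply, inner_sum]
    _ = ‖(∑ k ∈ s, p k) x‖ ^ 2 :=
        inner_proj_self _ (sum_proj_star s p hsym) (sum_proj_idem s p hidem horth) x

lemma sum_proj_sq_le (hsym : ∀ k ∈ s, star (p k) = p k) (hidem : ∀ k ∈ s, p k * p k = p k)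
    (horth : ∀ i ∈ s, ∀ k ∈ s, i ≠ k → p i * p k = 0) (x : EuclideanSpace ℝ (Fin d)) :
    ∑ k ∈ s, ‖p k x‖ ^ 2 ≤ ‖x‖ ^ 2 := by
  rw [sum_proj_sq s p hsym hidem horth x]
  exact pow_le_pow_left₀ (norm_nonneg _)
    (proj_apply_le _ (sum_proj_star s p hsym) (sum_proj_idem s p hidem horth) x) 2

lemma weighted_sum_norm_le (hsym : ∀ k ∈ s, star (p k) = p k)
    (hidem : ∀ k ∈ s, p k * p k = p k)
    (horth : ∀ i ∈ s, ∀ k ∈ s, i ≠ k → p i * p k = 0)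
    (c : ℕ → ℝ) (M : ℝ) (hM : 0 ≤ M) (hc : ∀ k ∈ s, |c k| ≤ M) :
    ‖∑ k ∈ s, c k • p k‖ ≤ M := by
  refine ContinuousLinearMap.opNorm_le_bound _ hM fun x => ?_
  have hgx : (∑ k ∈ s, c k • p k) x = ∑ k ∈ s, c k • p k x := by
    simp [ContinuousLinearMap.sum_apply]
  have hsq : ‖(∑ k ∈ s, c k • p k) x‖ ^ 2 = ∑ k ∈ s, (c k) ^ 2 * ‖p k x‖ ^ 2 := by
    rw [← real_inner_self_eq_norm_sq, hgx, sum_inner]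
    refine Finset.sum_congr rfl fun k hk => ?_
    rw [inner_sum]
    rw [Finset.sum_eq_single k ?h1 (fun h => absurd hk h)]
    · rw [real_inner_smul_left, real_inner_smul_right, real_inner_self_eq_norm_sq]
      ring
    · intro b hb hne
      rw [real_inner_smul_left, real_inner_smul_right,
        inner_move (p k) (hsym k hk) x (p b x)]
      have : p k (p b x) = (p k * p b) x := rfl
      rw [this, horth k hk b hb (Ne.symm hne)]
      simp
  have hle : ‖(∑ k ∈ s, c k • p k) x‖ ^ 2 ≤ (M * ‖x‖) ^ 2 := by
    rw [hsq]
    calc ∑ k ∈ s, (c k) ^ 2 * ‖p k x‖ ^ 2 ≤ ∑ k ∈ s, M ^ 2 * ‖p k x‖ ^ 2 := by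
          refine Finset.sum_le_sum fun k hk => ?_
          have h1 : (c k) ^ 2 ≤ M ^ 2 := by
            have := hc k hk
            nlinarith [abs_nonneg (c k), le_abs_self (c k), neg_abs_le (c k)]
          nlinarith [sq_nonneg ‖p k x‖]
      _ = M ^ 2 * ∑ k ∈ s, ‖p k x‖ ^ 2 := by rw [Finset.mul_sum]
      _ ≤ M ^ 2 * ‖x‖ ^ 2 := by
          have := sum_proj_sq_le s p hsym hidem horth x
          nlinarith [sq_nonneg M]
      _ = (M * ‖x‖) ^ 2 := by ring
  calc ‖(∑ k ∈ s, c k • p k) x‖ = Real.sqrt (‖(∑ k ∈ s, c k • p k) x‖ ^ 2) :=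
        (Real.sqrt_sq (norm_nonneg _)).symm
    _ ≤ Real.sqrt ((M * ‖x‖) ^ 2) := Real.sqrt_le_sqrt hle
    _ = M * ‖x‖ := Real.sqrt_sq (by positivity)

lemma apply_eq_of_mem_range (hidem : ∀ k ∈ s, p k * p k = p k)
    (horth : ∀ i ∈ s, ∀ k ∈ s, i ≠ k → p i * p k = 0) (v : EuclideanSpace ℝ (Fin d))
    (hv : v ∈ LinearMap.range (((∑ k ∈ s, p k) : EuclideanSpace ℝ (Fin d) →L[ℝ] EuclideanSpace ℝ (Fin d)) : EuclideanSpace ℝ (Fin d) →ₗ[ℝ] EuclideanSpace ℝ (Fin d))) :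
    (∑ k ∈ s, p k) v = v := by
  obtain ⟨w, hw⟩ := hv
  have hw' : (∑ k ∈ s, p k) w = v := hw
  have hqq := sum_proj_idem s p hidem horth
  calc (∑ k ∈ s, p k) v = ((∑ k ∈ s, p k) * (∑ k ∈ s, p k)) w := by
        rw [ContinuousLinearMap.mul_apply, hw']
    _ = (∑ k ∈ s, p k) w := by rw [hqq]
    _ = v := hw'

lemma proj_apply_of_mem (hidem : ∀ k ∈ s, p k * p k = p k)
    (horth : ∀ i ∈ s, ∀ k ∈ s, i ≠ k → p i * p k = 0)
    {k : ℕ} (hk : k ∈ s) (x : EuclideanSpace ℝ (Fin d)) :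
    (∑ l ∈ s, p l) (p k x) = p k x := by
  rw [ContinuousLinearMap.sum_apply]
  have : ∀ l, p l (p k x) = (p l * p k) x := fun l => rfl
  calc ∑ l ∈ s, p l (p k x) = ∑ l ∈ s, (p l * p k) x := by
        exact Finset.sum_congr rfl fun l _ => this l
    _ = p k x := by
        rw [Finset.sum_eq_single k (fun b hb hne => by rw [horth b hb k hk hne]; rfl)
          (fun h => absurd hk h), hidem k hk]

lemma card_le_finrank_range (hsym : ∀ k ∈ s, star (p k) = p k)
    (hidem : ∀ k ∈ s, p k * p k = p k)
    (horth : ∀ i ∈ s, ∀ k ∈ s, i ≠ k → p i * p k = 0)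
    (hne : ∀ k ∈ s, p k ≠ 0) :
    s.card ≤ Module.finrank ℝ
      (LinearMap.range (((∑ k ∈ s, p k) : EuclideanSpace ℝ (Fin d) →L[ℝ] EuclideanSpace ℝ (Fin d)) : EuclideanSpace ℝ (Fin d) →ₗ[ℝ] EuclideanSpace ℝ (Fin d))) := by
  classical
  have hx : ∀ k : {k // k ∈ s}, ∃ x : EuclideanSpace ℝ (Fin d), p k x ≠ 0 := by
    intro k
    by_contra h
    push_neg at h
    exact hne k k.2 (ContinuousLinearMap.ext fun x => h x)
  choose x hx using hx
  set u : {k // k ∈ s} → EuclideanSpace ℝ (Fin d) :=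
    fun k => ‖p k (x k)‖⁻¹ • p k (x k) with hu
  have hnorm : ∀ k : {k // k ∈ s}, ‖p k (x k)‖ ≠ 0 :=
    fun k => norm_ne_zero_iff.mpr (hx k)
  have hortho : Orthonormal ℝ u := by
    rw [orthonormal_iff_ite]
    intro i j
    by_cases hij : i = j
    · subst hij
      rw [if_pos rfl]
      have heq : (inner ℝ (u i) (u i) : ℝ) =
          ‖p i (x i)‖⁻¹ * (‖p i (x i)‖⁻¹ * ‖p i (x i)‖ ^ 2) := by
        simp only [hu]
        rw [real_inner_smul_left, real_inner_smul_right, real_inner_self_eq_norm_sq]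
      rw [heq, pow_two]
      have hn := hnorm i
      field_simp
    · rw [if_neg hij]
      have hij' : (i : ℕ) ≠ (j : ℕ) := fun h => hij (Subtype.ext h)
      simp only [hu, real_inner_smul_left, real_inner_smul_right]
      rw [inner_move (p i) (hsym i i.2) (x i) (p j (x j))]
      have : p (i : ℕ) (p (j : ℕ) (x j)) = (p i * p j) (x j) := rfl
      rw [this, horth i i.2 j j.2 hij']
      simp
  have hli := hortho.linearIndependent
  have hspan : Submodule.span ℝ (Set.range u) ≤
      LinearMap.range (((∑ k ∈ s, p k) : EuclideanSpace ℝ (Fin d) →L[ℝ] EuclideanSpace ℝ (Fin d)) : EuclideanSpace ℝ (Fin d) →ₗ[ℝ] EuclideanSpace ℝ (Fin d)) := by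
    rw [Submodule.span_le]
    rintro _ ⟨i, rfl⟩
    refine Submodule.smul_mem _ _ ?_
    exact LinearMap.mem_range.mpr ⟨p i (x i), proj_apply_of_mem s p hidem horth i.2 (x i)⟩
  calc s.card = Fintype.card {k // k ∈ s} := (Fintype.card_coe s).symm
    _ = Module.finrank ℝ (Submodule.span ℝ (Set.range u)) := (finrank_span_eq_card hli).symm
    _ ≤ _ := Submodule.finrank_mono hspan

lemma rayleigh_eq (lam : ℕ → ℝ) (hsym : ∀ k ∈ s, star (p k) = p k)
    (hidem : ∀ k ∈ s, p k * p k = p k)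
    (horth : ∀ i ∈ s, ∀ k ∈ s, i ≠ k → p i * p k = 0)
    (t : Finset ℕ) (hts : t ⊆ s) (v : EuclideanSpace ℝ (Fin d))
    (hv : (∑ k ∈ t, p k) v = v) :
    (inner ℝ v ((∑ i ∈ s, lam i • p i) v) : ℝ) = ∑ i ∈ t, lam i * ‖p i v‖ ^ 2 := by
  have hvanish : ∀ i ∈ s, i ∉ t → p i v = 0 := by
    intro i hi hit
    have h0 : p i v = p i ((∑ k ∈ t, p k) v) := by rw [hv]
    rw [h0, ContinuousLinearMap.sum_apply, map_sum]
    refine Finset.sum_eq_zero fun k hk => ?_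
    have h1 : p i (p k v) = (p i * p k) v := rfl
    rw [h1, horth i hi k (hts hk) (fun h => hit (h ▸ hk))]
    rfl
  have hmain : (inner ℝ v ((∑ i ∈ s, lam i • p i) v) : ℝ) = ∑ i ∈ s, lam i * ‖p i v‖ ^ 2 := by
    rw [ContinuousLinearMap.sum_apply, inner_sum]
    refine Finset.sum_congr rfl fun i hi => ?_
    rw [ContinuousLinearMap.smul_apply, real_inner_smul_right,
      inner_proj_self _ (hsym i hi) (hidem i hi)]
  rw [hmain]
  exact (Finset.sum_subset hts (fun i hi hit => by rw [hvanish i hi hit]; simp)).symm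

end family

section weyl

variable (p pT : ℕ → EuclideanSpace ℝ (Fin d) →L[ℝ] EuclideanSpace ℝ (Fin d))
variable (lam lamT : ℕ → ℝ)

lemma weyl_one_sided
    (hsym : ∀ k < d, star (p k) = p k) (hidem : ∀ k < d, p k * p k = p k)
    (horth : ∀ i < d, ∀ k < d, i ≠ k → p i * p k = 0) (hne : ∀ k < d, p k ≠ 0)
    (hTsym : ∀ k < d, star (pT k) = pT k) (hTidem : ∀ k < d, pT k * pT k = pT k)
    (hTorth : ∀ i < d, ∀ k < d, i ≠ k → pT i * pT k = 0) (hTne : ∀ k < d, pT k ≠ 0)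
    (hmono : ∀ i k, i ≤ k → k < d → lam k ≤ lam i)
    (hTmono : ∀ i k, i ≤ k → k < d → lamT k ≤ lamT i)
    (k : ℕ) (hk : k < d) :
    lamT k ≤ lam k +
      ‖(∑ i ∈ range d, lamT i • pT i) - (∑ i ∈ range d, lam i • p i)‖ := by
  classical
  set s1 : Finset ℕ := range (k + 1) with hs1def
  set s2 : Finset ℕ := Finset.Ico k d with hs2def
  have hs1 : ∀ i ∈ s1, i < d := fun i hi => by
    rw [hs1def, Finset.mem_range] at hi; omega
  have hs2 : ∀ i ∈ s2, i < d := fun i hi => by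
    rw [hs2def, Finset.mem_Ico] at hi; omega
  have hs1sub : s1 ⊆ range d := fun i hi => Finset.mem_range.mpr (hs1 i hi)
  have hs2sub : s2 ⊆ range d := fun i hi => Finset.mem_range.mpr (hs2 i hi)
  -- dimension counting
  set W1 := LinearMap.range (((∑ i ∈ s1, pT i) : EuclideanSpace ℝ (Fin d) →L[ℝ]
    EuclideanSpace ℝ (Fin d)) : EuclideanSpace ℝ (Fin d) →ₗ[ℝ] EuclideanSpace ℝ (Fin d)) with hW1
  set W2 := LinearMap.range (((∑ i ∈ s2, p i) : EuclideanSpace ℝ (Fin d) →L[ℝ]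
    EuclideanSpace ℝ (Fin d)) : EuclideanSpace ℝ (Fin d) →ₗ[ℝ] EuclideanSpace ℝ (Fin d)) with hW2
  have h1 : k + 1 ≤ Module.finrank ℝ W1 := by
    have := card_le_finrank_range s1 pT (fun i hi => hTsym i (hs1 i hi))
      (fun i hi => hTidem i (hs1 i hi))
      (fun i hi l hl hil => hTorth i (hs1 i hi) l (hs1 l hl) hil)
      (fun i hi => hTne i (hs1 i hi))
    simpa [hs1def, Finset.card_range] using this
  have h2 : d - k ≤ Module.finrank ℝ W2 := by
    have := card_le_finrank_range s2 p (fun i hi => hsym i (hs2 i hi))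
      (fun i hi => hidem i (hs2 i hi))
      (fun i hi l hl hil => horth i (hs2 i hi) l (hs2 l hl) hil)
      (fun i hi => hne i (hs2 i hi))
    simpa [hs2def, Nat.card_Ico] using this
  have hfr : Module.finrank ℝ (EuclideanSpace ℝ (Fin d)) = d := by
    simp [finrank_euclideanSpace]
  have hkey := Submodule.finrank_sup_add_finrank_inf_eq W1 W2
  have hsup : Module.finrank ℝ ↑(W1 ⊔ W2) ≤ d := by
    have := Submodule.finrank_le (W1 ⊔ W2)
    omega
  have hinf : 0 < Module.finrank ℝ ↑(W1 ⊓ W2) := by omega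
  obtain ⟨x, hx0⟩ := Module.finrank_pos_iff_exists_ne_zero.mp hinf
  obtain ⟨v, hvmem⟩ := x
  have hv : v ≠ 0 := by
    intro h
    exact hx0 (Subtype.ext h)
  obtain ⟨hm1, hm2⟩ := Submodule.mem_inf.mp hvmem
  have hq1 : (∑ i ∈ s1, pT i) v = v :=
    apply_eq_of_mem_range s1 pT (fun i hi => hTidem i (hs1 i hi))
      (fun i hi l hl hil => hTorth i (hs1 i hi) l (hs1 l hl) hil) v hm1
  have hq2 : (∑ i ∈ s2, p i) v = v :=
    apply_eq_of_mem_range s2 p (fun i hi => hidem i (hs2 i hi))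
      (fun i hi l hl hil => horth i (hs2 i hi) l (hs2 l hl) hil) v hm2
  -- Rayleigh quotients
  have hsymR : ∀ i ∈ range d, star (p i) = p i := fun i hi => hsym i (Finset.mem_range.mp hi)
  have hidemR : ∀ i ∈ range d, p i * p i = p i := fun i hi => hidem i (Finset.mem_range.mp hi)
  have horthR : ∀ i ∈ range d, ∀ l ∈ range d, i ≠ l → p i * p l = 0 :=
    fun i hi l hl hil => horth i (Finset.mem_range.mp hi) l (Finset.mem_range.mp hl) hil
  have hTsymR : ∀ i ∈ range d, star (pT i) = pT i := fun i hi => hTsym i (Finset.mem_range.mp hi)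
  have hTidemR : ∀ i ∈ range d, pT i * pT i = pT i := fun i hi => hTidem i (Finset.mem_range.mp hi)
  have hTorthR : ∀ i ∈ range d, ∀ l ∈ range d, i ≠ l → pT i * pT l = 0 :=
    fun i hi l hl hil => hTorth i (Finset.mem_range.mp hi) l (Finset.mem_range.mp hl) hil
  have hT := rayleigh_eq (range d) pT lamT hTsymR hTidemR hTorthR s1 hs1sub v hq1
  have hS := rayleigh_eq (range d) p lam hsymR hidemR horthR s2 hs2sub v hq2
  have hTnorm : ∑ i ∈ s1, ‖pT i v‖ ^ 2 = ‖v‖ ^ 2 := by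
    rw [sum_proj_sq s1 pT (fun i hi => hTsym i (hs1 i hi)) (fun i hi => hTidem i (hs1 i hi))
      (fun i hi l hl hil => hTorth i (hs1 i hi) l (hs1 l hl) hil) v, hq1]
  have hSnorm : ∑ i ∈ s2, ‖p i v‖ ^ 2 = ‖v‖ ^ 2 := by
    rw [sum_proj_sq s2 p (fun i hi => hsym i (hs2 i hi)) (fun i hi => hidem i (hs2 i hi))
      (fun i hi l hl hil => horth i (hs2 i hi) l (hs2 l hl) hil) v, hq2]
  have hTge : lamT k * ‖v‖ ^ 2 ≤ inner ℝ v ((∑ i ∈ range d, lamT i • pT i) v) := by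
    rw [hT, ← hTnorm, Finset.mul_sum]
    refine Finset.sum_le_sum fun i hi => ?_
    have : i ≤ k := by rw [hs1def, Finset.mem_range] at hi; omega
    exact mul_le_mul_of_nonneg_right (hTmono i k this hk) (sq_nonneg _)
  have hSle : (inner ℝ v ((∑ i ∈ range d, lam i • p i) v) : ℝ) ≤ lam k * ‖v‖ ^ 2 := by
    rw [hS, ← hSnorm, Finset.mul_sum]
    refine Finset.sum_le_sum fun i hi => ?_
    rw [hs2def, Finset.mem_Ico] at hi
    exact mul_le_mul_of_nonneg_right (hmono k i hi.1 hi.2) (sq_nonneg _)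
  set e := (∑ i ∈ range d, lamT i • pT i) - (∑ i ∈ range d, lam i • p i) with he
  have hsub : (inner ℝ v (e v) : ℝ) =
      inner ℝ v ((∑ i ∈ range d, lamT i • pT i) v) - inner ℝ v ((∑ i ∈ range d, lam i • p i) v) := by
    rw [he, ContinuousLinearMap.sub_apply, inner_sub_right]
  have hbd : (inner ℝ v (e v) : ℝ) ≤ ‖e‖ * ‖v‖ ^ 2 := by
    calc (inner ℝ v (e v) : ℝ) ≤ ‖v‖ * ‖e v‖ := real_inner_le_norm v (e v)
      _ ≤ ‖v‖ * (‖e‖ * ‖v‖) := mul_le_mul_of_nonneg_left (e.le_opNorm v) (norm_nonneg v)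
      _ = ‖e‖ * ‖v‖ ^ 2 := by ring
  have hvpos : 0 < ‖v‖ := norm_pos_iff.mpr hv
  nlinarith [sq_nonneg ‖v‖, mul_pos hvpos hvpos]

end weyl

section resolvent

lemma mul_smul_right (A B : EuclideanSpace ℝ (Fin d) →L[ℝ] EuclideanSpace ℝ (Fin d)) (c : ℝ) :
    A * (c • B) = c • (A * B) := by
  ext x; simp

lemma smul_mul_left (A B : EuclideanSpace ℝ (Fin d) →L[ℝ] EuclideanSpace ℝ (Fin d)) (c : ℝ) :
    (c • A) * B = c • (A * B) := by
  ext x; simp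

lemma half_bound (p : ℕ → EuclideanSpace ℝ (Fin d) →L[ℝ] EuclideanSpace ℝ (Fin d))
    (lam : ℕ → ℝ) (j : ℕ) (hj : j < d)
    (hsym : ∀ k < d, star (p k) = p k) (hidem : ∀ k < d, p k * p k = p k)
    (horth : ∀ i < d, ∀ k < d, i ≠ k → p i * p k = 0)
    (hsum : ∑ k ∈ range d, p k = 1)
    (q sig2 : EuclideanSpace ℝ (Fin d) →L[ℝ] EuclideanSpace ℝ (Fin d)) (c δ : ℝ)
    (hq : sig2 * q = c • q) (hqn : ‖q‖ ≤ 1) (hδ : 0 < δ)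
    (hgap : ∀ k < d, k ≠ j → δ ≤ |c - lam k|) :
    ‖(1 - p j) * q‖ ≤ ‖sig2 - ∑ k ∈ range d, lam k • p k‖ / δ := by
  classical
  set sig := ∑ k ∈ range d, lam k • p k with hsig
  set t : Finset ℕ := (range d).erase j with htdef
  have htmem : ∀ k ∈ t, k < d ∧ k ≠ j := fun k hk => by
    rw [htdef, Finset.mem_erase, Finset.mem_range] at hk; exact ⟨hk.2, hk.1⟩
  have hne0 : ∀ k ∈ t, c - lam k ≠ 0 := fun k hk => by
    have := hgap k (htmem k hk).1 (htmem k hk).2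
    intro h
    rw [h, abs_zero] at this
    linarith
  set r := ∑ k ∈ t, (c - lam k)⁻¹ • p k with hr
  have hrn : ‖r‖ ≤ δ⁻¹ := by
    refine weighted_sum_norm_le t p (fun k hk => hsym k (htmem k hk).1)
      (fun k hk => hidem k (htmem k hk).1)
      (fun i hi k hk hik => horth i (htmem i hi).1 k (htmem k hk).1 hik)
      _ _ (inv_nonneg.mpr hδ.le) fun k hk => ?_
    rw [abs_inv]
    exact inv_anti₀ hδ (hgap k (htmem k hk).1 (htmem k hk).2)
  have hpk_sig : ∀ k < d, p k * sig = lam k • p k := by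
    intro k hk
    rw [hsig, Finset.mul_sum]
    have : ∀ i ∈ range d, p k * (lam i • p i) = lam i • (p k * p i) := fun i _ =>
      mul_smul_right _ _ _
    rw [Finset.sum_congr rfl this,
      Finset.sum_eq_single k
        (fun i hi hik => by rw [horth k hk i (Finset.mem_range.mp hi) (Ne.symm hik)]; ext x; simp)
        (fun h => absurd (Finset.mem_range.mpr hk) h),
      hidem k hk]
  have hkey : r * ((sig2 - sig) * q) = (1 - p j) * q := by
    have hstep : ∀ k ∈ t, p k * ((sig2 - sig) * q) = (c - lam k) • (p k * q) := by
      intro k hk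
      have h1 : (sig2 - sig) * q = c • q - sig * q := by rw [sub_mul, hq]
      rw [h1, mul_sub, mul_smul_right, ← mul_assoc, hpk_sig k (htmem k hk).1,
        smul_mul_left]
      module
    calc r * ((sig2 - sig) * q) = ∑ k ∈ t, (c - lam k)⁻¹ • (p k * ((sig2 - sig) * q)) := by
          rw [hr, Finset.sum_mul]
          exact Finset.sum_congr rfl fun k _ => smul_mul_left _ _ _
      _ = ∑ k ∈ t, p k * q := by
          refine Finset.sum_congr rfl fun k hk => ?_
          rw [hstep k hk]
          ext x
          simp [smul_smul, inv_mul_cancel₀ (hne0 k hk)]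
      _ = (∑ k ∈ t, p k) * q := (Finset.sum_mul _ _ _).symm
      _ = (1 - p j) * q := by
          congr 1
          have := Finset.sum_erase_add (range d) p (Finset.mem_range.mpr hj)
          rw [hsum] at this
          rw [htdef]
          linear_combination (norm := abel) this
  have h1 : ‖(1 - p j) * q‖ ≤ ‖r‖ * (‖sig2 - sig‖ * ‖q‖) := by
    rw [← hkey]
    calc ‖r * ((sig2 - sig) * q)‖ ≤ ‖r‖ * ‖(sig2 - sig) * q‖ := norm_mul_le _ _
      _ ≤ ‖r‖ * (‖sig2 - sig‖ * ‖q‖) :=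
        mul_le_mul_of_nonneg_left (norm_mul_le _ _) (norm_nonneg r)
  calc ‖(1 - p j) * q‖ ≤ ‖r‖ * (‖sig2 - sig‖ * ‖q‖) := h1
    _ ≤ δ⁻¹ * (‖sig2 - sig‖ * 1) := by
        refine mul_le_mul hrn ?_ (by positivity) (inv_nonneg.mpr hδ.le)
        exact mul_le_mul_of_nonneg_left hqn (norm_nonneg _)
    _ = ‖sig2 - sig‖ / δ := by rw [div_eq_mul_inv]; ring

end resolvent

end KLaux


/-- Eigenprojector perturbation bound (Koltchinskii–Lounici):
`‖P̃ⱼ − Pⱼ‖ ≤ 4 ‖Σ̃ − Σ‖ / ḡⱼ` where `ḡⱼ` is the minimum of the spectral gaps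
adjacent to the `j`-th eigenvalue.  (0-based indexing: `g j = λ j − λ (j+1)`,
`ḡ 0 = g 0`, `ḡ j = min (g (j-1)) (g j)` for `j ≥ 1`; eigenvalues beyond `d`
are set to `0`.) -/
theorem eigenprojector_perturbation {d : ℕ} (j : ℕ) (hj : j < d)
    (Sig SigT : Matrix (Fin d) (Fin d) ℝ)
    (P PT : ℕ → Matrix (Fin d) (Fin d) ℝ) (lam lamT : ℕ → ℝ)
    -- spectral decomposition of Σ with simple (rank-one) eigenprojectors,
    -- eigenvalues in decreasing order:
    (hPsymm : ∀ k < d, (P k)ᵀ = P k)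
    (hPidem : ∀ k < d, P k * P k = P k)
    (hPorth : ∀ i < d, ∀ k < d, i ≠ k → P i * P k = 0)
    (hPsum : ∑ k ∈ range d, P k = 1)
    (hPrank : ∀ k < d, (P k).trace = 1)
    (hlam_mono : ∀ i k, i ≤ k → k < d → lam k ≤ lam i)
    (hlam_zero : ∀ k, d ≤ k → lam k = 0)
    (hSig : Sig = ∑ k ∈ range d, lam k • P k)
    -- same for Σ̃ :
    (hPTsymm : ∀ k < d, (PT k)ᵀ = PT k)
    (hPTidem : ∀ k < d, PT k * PT k = PT k)
    (hPTorth : ∀ i < d, ∀ k < d, i ≠ k → PT i * PT k = 0)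
    (hPTsum : ∑ k ∈ range d, PT k = 1)
    (hPTrank : ∀ k < d, (PT k).trace = 1)
    (hlamT_mono : ∀ i k, i ≤ k → k < d → lamT k ≤ lamT i)
    (hSigT : SigT = ∑ k ∈ range d, lamT k • PT k)
    -- the relevant spectral gap is positive:
    (hgap : 0 < (if j = 0 then lam 0 - lam 1
                 else min (lam (j - 1) - lam j) (lam j - lam (j + 1)))) :
    opNorm (PT j - P j)
      ≤ 4 * opNorm (SigT - Sig)
          / (if j = 0 then lam 0 - lam 1
             else min (lam (j - 1) - lam j) (lam j - lam (j + 1))) := by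
  classical
  set T := Matrix.toEuclideanCLM (𝕜 := ℝ) (n := Fin d) with hT
  have hbridge : ∀ A : Matrix (Fin d) (Fin d) ℝ, opNorm A = ‖T A‖ := fun A => rfl
  set p : ℕ → EuclideanSpace ℝ (Fin d) →L[ℝ] EuclideanSpace ℝ (Fin d) := fun k => T (P k) with hp
  set pT : ℕ → EuclideanSpace ℝ (Fin d) →L[ℝ] EuclideanSpace ℝ (Fin d) := fun k => T (PT k)
    with hpT
  set G : ℝ := (if j = 0 then lam 0 - lam 1
      else min (lam (j - 1) - lam j) (lam j - lam (j + 1))) with hGdef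
  -- transfer the hypotheses to the operator side
  have hp_symm : ∀ k < d, star (p k) = p k := by
    intro k hk
    simp only [hp]
    rw [← StarHomClass.map_star, Matrix.star_eq_conjTranspose,
      Matrix.conjTranspose_eq_transpose_of_trivial, hPsymm k hk]
  have hpT_symm : ∀ k < d, star (pT k) = pT k := by
    intro k hk
    simp only [hpT]
    rw [← StarHomClass.map_star, Matrix.star_eq_conjTranspose,
      Matrix.conjTranspose_eq_transpose_of_trivial, hPTsymm k hk]
  have hp_idem : ∀ k < d, p k * p k = p k := fun k hk => by
    simp only [hp]; rw [← _root_.map_mul, hPidem k hk]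
  have hpT_idem : ∀ k < d, pT k * pT k = pT k := fun k hk => by
    simp only [hpT]; rw [← _root_.map_mul, hPTidem k hk]
  have hp_orth : ∀ i < d, ∀ k < d, i ≠ k → p i * p k = 0 := fun i hi k hk hik => by
    simp only [hp]; rw [← _root_.map_mul, hPorth i hi k hk hik, _root_.map_zero]
  have hpT_orth : ∀ i < d, ∀ k < d, i ≠ k → pT i * pT k = 0 := fun i hi k hk hik => by
    simp only [hpT]; rw [← _root_.map_mul, hPTorth i hi k hk hik, _root_.map_zero]
  have hp_sum : ∑ k ∈ range d, p k = 1 := by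
    simp only [hp]; rw [← _root_.map_sum, hPsum, _root_.map_one]
  have hpT_sum : ∑ k ∈ range d, pT k = 1 := by
    simp only [hpT]; rw [← _root_.map_sum, hPTsum, _root_.map_one]
  have hp_ne : ∀ k < d, p k ≠ 0 := by
    intro k hk h0
    have h1 : P k = 0 := by
      apply_fun T using (EquivLike.injective T)
      rw [_root_.map_zero]; exact h0
    have := hPrank k hk
    rw [h1] at this
    simp at this
  have hpT_ne : ∀ k < d, pT k ≠ 0 := by
    intro k hk h0
    have h1 : PT k = 0 := by
      apply_fun T using (EquivLike.injective T)
      rw [_root_.map_zero]; exact h0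
    have := hPTrank k hk
    rw [h1] at this
    simp at this
  have hsig : T Sig = ∑ k ∈ range d, lam k • p k := by
    rw [hSig, _root_.map_sum]
    exact Finset.sum_congr rfl fun k _ => _root_.map_smul _ _ _
  have hsigT : T SigT = ∑ k ∈ range d, lamT k • pT k := by
    rw [hSigT, _root_.map_sum]
    exact Finset.sum_congr rfl fun k _ => _root_.map_smul _ _ _
  set ε : ℝ := ‖T SigT - T Sig‖ with hε
  have hopsub : opNorm (SigT - Sig) = ε := by rw [hbridge, _root_.map_sub]
  have hopgoal : opNorm (PT j - P j) = ‖pT j - p j‖ := by rw [hbridge, _root_.map_sub]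
  rw [hopsub, hopgoal]
  have hε0 : 0 ≤ ε := norm_nonneg _
  -- gap facts
  have hGj1 : G ≤ lam j - lam (j + 1) := by
    by_cases h : j = 0
    · subst h; simp [hGdef]
    · rw [hGdef, if_neg h]; exact min_le_right _ _
  have hGj0 : j ≠ 0 → G ≤ lam (j - 1) - lam j := by
    intro h
    rw [hGdef, if_neg h]; exact min_le_left _ _
  have hgapfact : ∀ k < d, k ≠ j → G ≤ |lam j - lam k| := by
    intro k hk hkj
    rcases lt_or_gt_of_ne hkj with hlt | hgt
    · have h1 : lam (j - 1) ≤ lam k := hlam_mono k (j - 1) (by omega) (by omega)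
      have h2 := hGj0 (by omega)
      have h3 : G ≤ lam k - lam j := by linarith
      calc G ≤ lam k - lam j := h3
        _ ≤ |lam k - lam j| := le_abs_self _
        _ = |lam j - lam k| := abs_sub_comm _ _
    · have h1 : lam k ≤ lam (j + 1) := hlam_mono (j + 1) k (by omega) hk
      have h3 : G ≤ lam j - lam k := by linarith
      exact h3.trans (le_abs_self _)
  -- Weyl's inequality
  have hweyl : ∀ k < d, |lamT k - lam k| ≤ ε := by
    intro k hk
    have h1 := KLaux.weyl_one_sided p pT lam lamT hp_symm hp_idem hp_orth hp_ne
      hpT_symm hpT_idem hpT_orth hpT_ne hlam_mono hlamT_mono k hk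
    have h2 := KLaux.weyl_one_sided pT p lamT lam hpT_symm hpT_idem hpT_orth hpT_ne
      hp_symm hp_idem hp_orth hp_ne hlamT_mono hlam_mono k hk
    rw [← hsig, ← hsigT] at h1
    rw [← hsig, ← hsigT, norm_sub_rev] at h2
    rw [abs_le]
    constructor <;> linarith
  by_cases hcase : G ≤ 2 * ε
  · -- trivial regime
    have h2 : ‖pT j - p j‖ ≤ 2 := by
      calc ‖pT j - p j‖ ≤ ‖pT j‖ + ‖p j‖ := norm_sub_le _ _
        _ ≤ 1 + 1 := add_le_add
            (KLaux.proj_norm_le_one _ (hpT_symm j hj) (hpT_idem j hj))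
            (KLaux.proj_norm_le_one _ (hp_symm j hj) (hp_idem j hj))
        _ = 2 := by norm_num
    refine h2.trans ?_
    rw [le_div_iff₀ hgap]
    linarith
  · push_neg at hcase
    have hδpos : 0 < G - ε := by linarith
    -- eigen-equations
    have hqA : T SigT * pT j = lamT j • pT j := by
      rw [hsigT, Finset.sum_mul]
      have h1 : ∀ k ∈ range d, (lamT k • pT k) * pT j = lamT k • (pT k * pT j) :=
        fun k _ => KLaux.smul_mul_left _ _ _
      rw [Finset.sum_congr rfl h1,
        Finset.sum_eq_single j
          (fun k hk hkj => by
            rw [hpT_orth k (Finset.mem_range.mp hk) j hj hkj]; ext x; simp)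
          (fun h => absurd (Finset.mem_range.mpr hj) h),
        hpT_idem j hj]
    have hqB : T Sig * p j = lam j • p j := by
      rw [hsig, Finset.sum_mul]
      have h1 : ∀ k ∈ range d, (lam k • p k) * p j = lam k • (p k * p j) :=
        fun k _ => KLaux.smul_mul_left _ _ _
      rw [Finset.sum_congr rfl h1,
        Finset.sum_eq_single j
          (fun k hk hkj => by
            rw [hp_orth k (Finset.mem_range.mp hk) j hj hkj]; ext x; simp)
          (fun h => absurd (Finset.mem_range.mpr hj) h),
        hp_idem j hj]
    have hgapA : ∀ k < d, k ≠ j → G - ε ≤ |lamT j - lam k| := by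
      intro k hk hkj
      have h1 := hgapfact k hk hkj
      have h2 := hweyl j hj
      have h3 := abs_sub_le (lam j) (lamT j) (lam k)
      have h4 : |lam j - lamT j| = |lamT j - lam j| := abs_sub_comm _ _
      linarith
    have hgapB : ∀ k < d, k ≠ j → G - ε ≤ |lam j - lamT k| := by
      intro k hk hkj
      have h1 := hgapfact k hk hkj
      have h2 := hweyl k hk
      have h3 := abs_sub_le (lam j) (lamT k) (lam k)
      linarith
    have hA := KLaux.half_bound p lam j hj hp_symm hp_idem hp_orth hp_sum
      (pT j) (T SigT) (lamT j) (G - ε) hqA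
      (KLaux.proj_norm_le_one _ (hpT_symm j hj) (hpT_idem j hj)) hδpos hgapA
    have hB := KLaux.half_bound pT lamT j hj hpT_symm hpT_idem hpT_orth hpT_sum
      (p j) (T Sig) (lam j) (G - ε) hqB
      (KLaux.proj_norm_le_one _ (hp_symm j hj) (hp_idem j hj)) hδpos hgapB
    rw [← hsig] at hA
    rw [← hsigT, norm_sub_rev] at hB
    have hBt : ‖p j * (1 - pT j)‖ = ‖(1 - pT j) * p j‖ := by
      have h2 : star (1 - pT j) = 1 - pT j := by
        have h0 : star (pT j) = pT j := hpT_symm j hj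
        calc star (1 - pT j) = star 1 - star (pT j) :=
            star_sub (1 : EuclideanSpace ℝ (Fin d) →L[ℝ] EuclideanSpace ℝ (Fin d)) (pT j)
          _ = 1 - pT j := by
            rw [h0]; congr 1; exact star_one (EuclideanSpace ℝ (Fin d) →L[ℝ] EuclideanSpace ℝ (Fin d))
      have h1 : star ((1 - pT j) * p j) = p j * (1 - pT j) :=
        (StarMul.star_mul _ _).trans (by rw [hp_symm j hj, h2])
      rw [← h1, KLaux.norm_star']
    have hdecomp : pT j - p j = (1 - p j) * pT j - p j * (1 - pT j) := by
      rw [sub_mul, mul_sub, one_mul, mul_one]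
      abel
    have hfinal : ‖pT j - p j‖ ≤ ε / (G - ε) + ε / (G - ε) := by
      calc ‖pT j - p j‖ = ‖(1 - p j) * pT j - p j * (1 - pT j)‖ := by rw [← hdecomp]
        _ ≤ ‖(1 - p j) * pT j‖ + ‖p j * (1 - pT j)‖ := norm_sub_le _ _
        _ ≤ ε / (G - ε) + ε / (G - ε) := by
            rw [hBt]
            exact add_le_add hA hB
    refine hfinal.trans ?_
    have h1 : ε / (G - ε) + ε / (G - ε) = 2 * ε / (G - ε) := by ring
    rw [h1, div_le_div_iff₀ hδpos hgap]
    nlinarith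
end

section
/- Let Z be an n × d real matrix, Λ = diag(λ₁,…,λ_d) with λ₁ ≥ … ≥ λ_d > 0, U orthogonal, Σ = UΛUᵀ, and Σ̂ = n⁻¹UΛ^{1/2}ZᵀZΛ^{1/2}Uᵀ. Partition coordinates into S = {1,…,m} and its complement; let Z_S, Z_⊥ be the corresponding column blocks of Z. Then ‖Σ̂ − Σ‖ ≤ λ₁‖n⁻¹Z_SᵀZ_S − I‖ + 2√(λ₁λ_{m+1}) σ_max(Z_S/√n) σ_max(Z_⊥/√n) + λ_{m+1} σ_max(Z_⊥/√n)² + λ_{m+1}, where ‖·‖ is the operator norm. -/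
open Matrix Finset

/-- The block of the first `m` columns of `Z`. -/
def colBlockLeft {n d : ℕ} (m : ℕ) (hm : m ≤ d) (Z : Matrix (Fin n) (Fin d) ℝ) :
    Matrix (Fin n) (Fin m) ℝ :=
  Matrix.of fun i j => Z i ⟨j, lt_of_lt_of_le j.2 hm⟩

/-- The block of the remaining `d - m` columns of `Z`. -/
def colBlockRight {n d : ℕ} (m : ℕ) (hm : m ≤ d) (Z : Matrix (Fin n) (Fin d) ℝ) :
    Matrix (Fin n) (Fin (d - m)) ℝ :=
  Matrix.of fun i j => Z i ⟨m + j, by have := j.isLt; omega⟩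

section Aux
open scoped Matrix.Norms.L2Operator

lemma opNorm_eq {m n : Type*} [Fintype m] [Fintype n] [DecidableEq n] (A : Matrix m n ℝ) :
    opNorm A = ‖A‖ := rfl

lemma my_norm_one_le {p : Type*} [Fintype p] [DecidableEq p] : ‖(1 : Matrix p p ℝ)‖ ≤ 1 := by
  have h1 : Matrix.toEuclideanLin (1 : Matrix p p ℝ) = LinearMap.id := by
    ext x
    simp [Matrix.toEuclideanLin_apply]
  rw [Matrix.l2_opNorm_def, LinearEquiv.trans_apply, h1]
  exact ContinuousLinearMap.norm_id_le

lemma my_norm_transpose {p q : Type*} [Fintype p] [Fintype q] [DecidableEq p] [DecidableEq q]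
    (A : Matrix p q ℝ) : ‖Aᵀ‖ = ‖A‖ := by
  rw [← Matrix.conjTranspose_eq_transpose_of_trivial, Matrix.l2_opNorm_conjTranspose]

lemma my_norm_contraction {p q : Type*} [Fintype p] [Fintype q] [DecidableEq p] [DecidableEq q]
    (X : Matrix p q ℝ) (h : Xᵀ * X = 1) : ‖X‖ ≤ 1 := by
  have h2 := Matrix.l2_opNorm_conjTranspose_mul_self X
  rw [Matrix.conjTranspose_eq_transpose_of_trivial, h] at h2
  have h3 : ‖(1 : Matrix q q ℝ)‖ ≤ 1 := my_norm_one_le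
  nlinarith [norm_nonneg X]

lemma diag_norm_le {p : Type*} [Fintype p] [DecidableEq p] (v : p → ℝ) (c : ℝ) (hc : 0 ≤ c)
    (h : ∀ i, |v i| ≤ c) : ‖(Matrix.diagonal v : Matrix p p ℝ)‖ ≤ c := by
  rw [Matrix.l2_opNorm_def]
  apply ContinuousLinearMap.opNorm_le_bound _ hc
  intro x
  simp only [LinearEquiv.trans_apply, LinearMap.coe_toContinuousLinearMap']
  rw [Matrix.toEuclideanLin_apply]
  rw [EuclideanSpace.norm_eq, EuclideanSpace.norm_eq]
  have key : ∀ i, ‖((WithLp.equiv 2 (p → ℝ)).symm ((Matrix.diagonal v) *ᵥ ((WithLp.equiv 2 (p → ℝ)) x))) i‖ ^ 2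
      ≤ c ^ 2 * ‖x i‖ ^ 2 := by
    intro i
    have he : ((WithLp.equiv 2 (p → ℝ)).symm ((Matrix.diagonal v) *ᵥ ((WithLp.equiv 2 (p → ℝ)) x))) i
        = v i * x i := by
      simp [Matrix.mulVec_diagonal]
    rw [he]
    have hv := h i
    rw [Real.norm_eq_abs, Real.norm_eq_abs, abs_mul]
    rw [mul_pow]
    exact mul_le_mul_of_nonneg_right (pow_le_pow_left₀ (abs_nonneg _) hv 2) (sq_nonneg _)
  calc Real.sqrt (∑ i, ‖((WithLp.equiv 2 (p → ℝ)).symm ((Matrix.diagonal v) *ᵥ ((WithLp.equiv 2 (p → ℝ)) x))) i‖ ^ 2)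
      ≤ Real.sqrt (∑ i, c ^ 2 * ‖x i‖ ^ 2) := by
        apply Real.sqrt_le_sqrt; exact Finset.sum_le_sum fun i _ => key i
    _ = c * Real.sqrt (∑ i, ‖x i‖ ^ 2) := by
        rw [← Finset.mul_sum, Real.sqrt_mul (by positivity), Real.sqrt_sq hc]

lemma norm_triple_le {p q r s : Type*} [Fintype p] [Fintype q] [Fintype r] [Fintype s]
    [DecidableEq q] [DecidableEq r] [DecidableEq s]
    (A : Matrix p q ℝ) (B : Matrix q r ℝ) (C : Matrix r s ℝ) {a b c : ℝ}
    (hA : ‖A‖ ≤ a) (hB : ‖B‖ ≤ b) (hC : ‖C‖ ≤ c) : ‖A * B * C‖ ≤ a * b * c := by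
  have ha : 0 ≤ a := (norm_nonneg _).trans hA
  have hb : 0 ≤ b := (norm_nonneg _).trans hB
  calc ‖A * B * C‖ ≤ ‖A * B‖ * ‖C‖ := Matrix.l2_opNorm_mul _ _
    _ ≤ (a * b) * c :=
        mul_le_mul ((Matrix.l2_opNorm_mul A B).trans
          (mul_le_mul hA hB (norm_nonneg _) ha)) hC (norm_nonneg _) (mul_nonneg ha hb)

end Aux

section Incl
variable {d m : ℕ}

/-- embedding of the right block indices -/
def embR (hm : m ≤ d) (j : Fin (d - m)) : Fin d := ⟨m + j, by have := j.isLt; omega⟩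

lemma embR_injective (hm : m ≤ d) : Function.Injective (embR hm) := by
  intro a b h
  simpa [embR, Fin.ext_iff] using h

noncomputable def inclL (hm : m ≤ d) : Matrix (Fin d) (Fin m) ℝ :=
  Matrix.of fun i j => if i = Fin.castLE hm j then 1 else 0

noncomputable def inclR (hm : m ≤ d) : Matrix (Fin d) (Fin (d - m)) ℝ :=
  Matrix.of fun i j => if i = embR hm j then 1 else 0

lemma mul_inclL (hm : m ≤ d) {n : ℕ} (Z : Matrix (Fin n) (Fin d) ℝ) :
    Z * inclL hm = colBlockLeft m hm Z := by
  ext i j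
  simp [Matrix.mul_apply, inclL, colBlockLeft, Fin.castLE]

lemma mul_inclR (hm : m ≤ d) {n : ℕ} (Z : Matrix (Fin n) (Fin d) ℝ) :
    Z * inclR hm = colBlockRight m hm Z := by
  ext i j
  simp [Matrix.mul_apply, inclR, colBlockRight, embR]
  rw [Finset.sum_eq_single (⟨m + j, by have := j.isLt; omega⟩ : Fin d)] <;> simp_all

lemma inclL_T_mul_inclL (hm : m ≤ d) : (inclL hm)ᵀ * inclL hm = 1 := by
  ext j k
  simp only [Matrix.mul_apply, Matrix.transpose_apply, inclL, Matrix.of_apply, ite_mul, one_mul,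
    zero_mul]
  rw [Finset.sum_ite_eq' Finset.univ (Fin.castLE hm j)]
  simp [Matrix.one_apply, Fin.castLE_inj, eq_comm]

lemma inclR_T_mul_inclR (hm : m ≤ d) : (inclR hm)ᵀ * inclR hm = 1 := by
  ext j k
  simp only [Matrix.mul_apply, Matrix.transpose_apply, inclR, Matrix.of_apply, ite_mul, one_mul,
    zero_mul]
  rw [Finset.sum_ite_eq' Finset.univ (embR hm j)]
  simp [Matrix.one_apply, (embR_injective hm).eq_iff, eq_comm]

lemma inclL_T_mul_inclR (hm : m ≤ d) : (inclL hm)ᵀ * inclR hm = 0 := by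
  ext j k
  simp only [Matrix.mul_apply, Matrix.transpose_apply, inclL, inclR, Matrix.of_apply, ite_mul,
    one_mul, zero_mul, Matrix.zero_apply]
  rw [Finset.sum_ite_eq' Finset.univ (Fin.castLE hm j)]
  have : Fin.castLE hm j ≠ embR hm k := by
    simp only [Fin.ne_iff_vne, Fin.coe_castLE, embR]
    have := j.isLt; omega
  simp [this]

lemma inclR_T_mul_inclL (hm : m ≤ d) : (inclR hm)ᵀ * inclL hm = 0 := by
  have := congrArg Matrix.transpose (inclL_T_mul_inclR hm)
  simpa [Matrix.transpose_mul] using this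

lemma incl_resolution (hm : m ≤ d) : inclL hm * (inclL hm)ᵀ + inclR hm * (inclR hm)ᵀ = 1 := by
  ext i i'
  simp only [Matrix.add_apply, Matrix.mul_apply, Matrix.transpose_apply, inclL, inclR,
    Matrix.of_apply, ite_mul, one_mul, zero_mul, mul_ite, mul_one, mul_zero]
  by_cases h : (i : ℕ) < m
  · have h1 : (∑ j : Fin m, if i' = Fin.castLE hm j then if i = Fin.castLE hm j then (1:ℝ) else 0 else 0)
        = if i' = i then 1 else 0 := by
      rw [Finset.sum_eq_single (⟨i, h⟩ : Fin m)]
      · simp [Fin.ext_iff, eq_comm]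
      · intro b _ hb
        have : i ≠ Fin.castLE hm b := by
          simp only [Fin.ne_iff_vne, Fin.coe_castLE]
          intro he; apply hb; exact Fin.ext (by simp [← he])
        simp [this]
      · simp
    have h2 : (∑ j : Fin (d - m), if i' = embR hm j then if i = embR hm j then (1:ℝ) else 0 else 0) = 0 := by
      apply Finset.sum_eq_zero
      intro b _
      have : i ≠ embR hm b := by
        simp only [Fin.ne_iff_vne, embR]; omega
      simp [this]
    rw [h1, h2, Matrix.one_apply]
    simp [eq_comm]
  · have h1 : (∑ j : Fin m, if i' = Fin.castLE hm j then if i = Fin.castLE hm j then (1:ℝ) else 0 else 0) = 0 := by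
      apply Finset.sum_eq_zero
      intro b _
      have : i ≠ Fin.castLE hm b := by
        simp only [Fin.ne_iff_vne, Fin.coe_castLE]
        have := b.isLt; omega
      simp [this]
    have h2 : (∑ j : Fin (d - m), if i' = embR hm j then if i = embR hm j then (1:ℝ) else 0 else 0)
        = if i' = i then 1 else 0 := by
      rw [Finset.sum_eq_single (⟨i - m, by have := i.isLt; omega⟩ : Fin (d - m))]
      · have : i = embR hm ⟨i - m, by have := i.isLt; omega⟩ := by
          simp [embR, Fin.ext_iff]; omega
        simp [← this, eq_comm]
      · intro b _ hb
        have : i ≠ embR hm b := by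
          simp only [Fin.ne_iff_vne, embR]
          intro he; apply hb; apply Fin.ext; simp; omega
        simp [this]
      · simp
    rw [h1, h2, Matrix.one_apply]
    simp [eq_comm]

lemma diag_mul_inclL (hm : m ≤ d) (v : Fin d → ℝ) :
    Matrix.diagonal v * inclL hm = inclL hm * Matrix.diagonal (fun j : Fin m => v (Fin.castLE hm j)) := by
  ext i j
  simp only [Matrix.diagonal_mul, Matrix.mul_diagonal, inclL, Matrix.of_apply]
  by_cases h : i = Fin.castLE hm j <;> simp [h]

lemma diag_mul_inclR (hm : m ≤ d) (v : Fin d → ℝ) :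
    Matrix.diagonal v * inclR hm = inclR hm * Matrix.diagonal (fun j : Fin (d - m) => v (embR hm j)) := by
  ext i j
  simp only [Matrix.diagonal_mul, Matrix.mul_diagonal, inclR, Matrix.of_apply]
  by_cases h : i = embR hm j <;> simp [h]

lemma block_decomp (hm : m ≤ d) (M : Matrix (Fin d) (Fin d) ℝ) :
    M = inclL hm * ((inclL hm)ᵀ * M * inclL hm) * (inclL hm)ᵀ
      + inclL hm * ((inclL hm)ᵀ * M * inclR hm) * (inclR hm)ᵀ
      + inclR hm * ((inclR hm)ᵀ * M * inclL hm) * (inclL hm)ᵀ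
      + inclR hm * ((inclR hm)ᵀ * M * inclR hm) * (inclR hm)ᵀ := by
  conv_lhs => rw [← Matrix.one_mul M, ← Matrix.mul_one (1 * M), ← incl_resolution hm]
  simp only [Matrix.add_mul, Matrix.mul_add, Matrix.mul_assoc]
  abel

end Incl

lemma mul_eq_push {p q r s : Type*} [Fintype q] [Fintype r]
    {A : Matrix p q ℝ} {B : Matrix q r ℝ} {C : Matrix p r ℝ} (h : A * B = C)
    (X : Matrix r s ℝ) : A * (B * X) = C * X := by
  rw [← Matrix.mul_assoc, h]

lemma conj_identity {d n' : ℕ} (c : ℝ) (U D L : Matrix (Fin d) (Fin d) ℝ)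
    (V : Matrix (Fin n') (Fin d) ℝ) (hDD : D * D = L) :
    c • (U * D * Vᵀ * V * D * Uᵀ) - U * L * Uᵀ
      = U * (D * (c • (Vᵀ * V) - 1) * D) * Uᵀ := by
  rw [← hDD]
  simp only [Matrix.mul_sub, Matrix.sub_mul, Matrix.mul_one, Matrix.one_mul, Matrix.mul_smul,
    Matrix.smul_mul, Matrix.mul_assoc]
lemma inclL_T_mul_diag {d m : ℕ} (hm : m ≤ d) (v : Fin d → ℝ) :
    (inclL hm)ᵀ * Matrix.diagonal v
      = Matrix.diagonal (fun j : Fin m => v (Fin.castLE hm j)) * (inclL hm)ᵀ := by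
  ext j i
  simp only [Matrix.diagonal_mul, Matrix.mul_diagonal, Matrix.transpose_apply, inclL,
    Matrix.of_apply]
  by_cases h : i = Fin.castLE hm j <;> simp [h]

lemma inclR_T_mul_diag {d m : ℕ} (hm : m ≤ d) (v : Fin d → ℝ) :
    (inclR hm)ᵀ * Matrix.diagonal v
      = Matrix.diagonal (fun j : Fin (d - m) => v (embR hm j)) * (inclR hm)ᵀ := by
  ext j i
  simp only [Matrix.diagonal_mul, Matrix.mul_diagonal, Matrix.transpose_apply, inclR,
    Matrix.of_apply]
  by_cases h : i = embR hm j <;> simp [h]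

section MainProof
open scoped Matrix.Norms.L2Operator

/-- Block decomposition bound for `‖Σ̂ − Σ‖` where `Σ = UΛUᵀ` and
`Σ̂ = n⁻¹ U Λ^{1/2} Zᵀ Z Λ^{1/2} Uᵀ`:
`‖Σ̂ − Σ‖ ≤ λ₁‖n⁻¹Z_SᵀZ_S − I‖ + 2√(λ₁λ_{m+1}) σ_max(Z_S/√n) σ_max(Z_⊥/√n)
  + λ_{m+1} σ_max(Z_⊥/√n)² + λ_{m+1}`. -/
theorem sample_covariance_deviation_bound {n d : ℕ} (m : ℕ) (hm : m < d)
    (Z : Matrix (Fin n) (Fin d) ℝ) (U : Matrix (Fin d) (Fin d) ℝ)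
    (lam : Fin d → ℝ)
    (hU : U * Uᵀ = 1) (hU' : Uᵀ * U = 1)
    (hlam_mono : ∀ i j : Fin d, i ≤ j → lam j ≤ lam i)
    (hlam_pos : ∀ j, 0 < lam j) :
    opNorm ((n : ℝ)⁻¹ •
        (U * Matrix.diagonal (fun j => Real.sqrt (lam j)) * Zᵀ * Z
           * Matrix.diagonal (fun j => Real.sqrt (lam j)) * Uᵀ)
      - U * Matrix.diagonal lam * Uᵀ)
      ≤ lam ⟨0, by omega⟩
          * opNorm ((n : ℝ)⁻¹ •
              ((colBlockLeft m hm.le Z)ᵀ * colBlockLeft m hm.le Z) - 1)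
        + 2 * Real.sqrt (lam ⟨0, by omega⟩ * lam ⟨m, hm⟩)
          * opNorm ((Real.sqrt n)⁻¹ • colBlockLeft m hm.le Z)
          * opNorm ((Real.sqrt n)⁻¹ • colBlockRight m hm.le Z)
        + lam ⟨m, hm⟩ * opNorm ((Real.sqrt n)⁻¹ • colBlockRight m hm.le Z) ^ 2
        + lam ⟨m, hm⟩ := by
  classical
  simp only [opNorm_eq]
  have hDD : Matrix.diagonal (fun j => Real.sqrt (lam j))
      * Matrix.diagonal (fun j => Real.sqrt (lam j)) = Matrix.diagonal lam := by
    rw [Matrix.diagonal_mul_diagonal]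
    exact congrArg Matrix.diagonal (funext fun j => Real.mul_self_sqrt (hlam_pos j).le)
  rw [conj_identity ((n : ℝ)⁻¹) U _ (Matrix.diagonal lam) Z hDD]
  set D : Matrix (Fin d) (Fin d) ℝ := Matrix.diagonal (fun j => Real.sqrt (lam j)) with hD_def
  set W : Matrix (Fin d) (Fin d) ℝ := (n : ℝ)⁻¹ • (Zᵀ * Z) - 1 with hW_def
  set P : Matrix (Fin d) (Fin m) ℝ := inclL hm.le with hP_def
  set Q : Matrix (Fin d) (Fin (d - m)) ℝ := inclR hm.le with hQ_def
  set ZS : Matrix (Fin n) (Fin m) ℝ := colBlockLeft m hm.le Z with hZS_def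
  set ZB : Matrix (Fin n) (Fin (d - m)) ℝ := colBlockRight m hm.le Z with hZB_def
  set DS : Matrix (Fin m) (Fin m) ℝ :=
    Matrix.diagonal (fun j : Fin m => Real.sqrt (lam (Fin.castLE hm.le j))) with hDS_def
  set DB : Matrix (Fin (d - m)) (Fin (d - m)) ℝ :=
    Matrix.diagonal (fun j : Fin (d - m) => Real.sqrt (lam (embR hm.le j))) with hDB_def
  -- commutation and structure facts
  have hDP : D * P = P * DS := diag_mul_inclL hm.le _
  have hDQ : D * Q = Q * DB := diag_mul_inclR hm.le _
  have hPD : Pᵀ * D = DS * Pᵀ := inclL_T_mul_diag hm.le _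
  have hQD : Qᵀ * D = DB * Qᵀ := inclR_T_mul_diag hm.le _
  have hZP : Z * P = ZS := mul_inclL hm.le Z
  have hZQ : Z * Q = ZB := mul_inclR hm.le Z
  have hPZ : Pᵀ * Zᵀ = ZSᵀ := by rw [← Matrix.transpose_mul, hZP]
  have hQZ : Qᵀ * Zᵀ = ZBᵀ := by rw [← Matrix.transpose_mul, hZQ]
  have hPP : Pᵀ * P = 1 := inclL_T_mul_inclL hm.le
  have hQQ : Qᵀ * Q = 1 := inclR_T_mul_inclR hm.le
  have hPQ : Pᵀ * Q = 0 := inclL_T_mul_inclR hm.le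
  have hQP : Qᵀ * P = 0 := inclR_T_mul_inclL hm.le
  -- the four blocks
  have hB11 : Pᵀ * (D * W * D) * P = DS * ((n : ℝ)⁻¹ • (ZSᵀ * ZS) - 1) * DS := by
    rw [hW_def]
    simp only [Matrix.mul_sub, Matrix.sub_mul, Matrix.mul_smul, Matrix.smul_mul, Matrix.mul_one,
      Matrix.one_mul, Matrix.mul_zero, Matrix.zero_mul, sub_zero, smul_zero, Matrix.mul_assoc,
      hDP, hDQ, hZP, hZQ, hPZ, hQZ, hPP, hQQ, hPQ, hQP,
      mul_eq_push hDP, mul_eq_push hDQ, mul_eq_push hPD, mul_eq_push hQD,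
      mul_eq_push hZP, mul_eq_push hZQ, mul_eq_push hPZ, mul_eq_push hQZ,
      mul_eq_push hPP, mul_eq_push hQQ, mul_eq_push hPQ, mul_eq_push hQP]
  have hB12 : Pᵀ * (D * W * D) * Q = DS * ((n : ℝ)⁻¹ • (ZSᵀ * ZB)) * DB := by
    rw [hW_def]
    simp only [Matrix.mul_sub, Matrix.sub_mul, Matrix.mul_smul, Matrix.smul_mul, Matrix.mul_one,
      Matrix.one_mul, Matrix.mul_zero, Matrix.zero_mul, sub_zero, smul_zero, Matrix.mul_assoc,
      hDP, hDQ, hZP, hZQ, hPZ, hQZ, hPP, hQQ, hPQ, hQP,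
      mul_eq_push hDP, mul_eq_push hDQ, mul_eq_push hPD, mul_eq_push hQD,
      mul_eq_push hZP, mul_eq_push hZQ, mul_eq_push hPZ, mul_eq_push hQZ,
      mul_eq_push hPP, mul_eq_push hQQ, mul_eq_push hPQ, mul_eq_push hQP]
  have hB21 : Qᵀ * (D * W * D) * P = DB * ((n : ℝ)⁻¹ • (ZBᵀ * ZS)) * DS := by
    rw [hW_def]
    simp only [Matrix.mul_sub, Matrix.sub_mul, Matrix.mul_smul, Matrix.smul_mul, Matrix.mul_one,
      Matrix.one_mul, Matrix.mul_zero, Matrix.zero_mul, sub_zero, smul_zero, Matrix.mul_assoc,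
      hDP, hDQ, hZP, hZQ, hPZ, hQZ, hPP, hQQ, hPQ, hQP,
      mul_eq_push hDP, mul_eq_push hDQ, mul_eq_push hPD, mul_eq_push hQD,
      mul_eq_push hZP, mul_eq_push hZQ, mul_eq_push hPZ, mul_eq_push hQZ,
      mul_eq_push hPP, mul_eq_push hQQ, mul_eq_push hPQ, mul_eq_push hQP]
  have hB22 : Qᵀ * (D * W * D) * Q = DB * ((n : ℝ)⁻¹ • (ZBᵀ * ZB) - 1) * DB := by
    rw [hW_def]
    simp only [Matrix.mul_sub, Matrix.sub_mul, Matrix.mul_smul, Matrix.smul_mul, Matrix.mul_one,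
      Matrix.one_mul, Matrix.mul_zero, Matrix.zero_mul, sub_zero, smul_zero, Matrix.mul_assoc,
      hDP, hDQ, hZP, hZQ, hPZ, hQZ, hPP, hQQ, hPQ, hQP,
      mul_eq_push hDP, mul_eq_push hDQ, mul_eq_push hPD, mul_eq_push hQD,
      mul_eq_push hZP, mul_eq_push hZQ, mul_eq_push hPZ, mul_eq_push hQZ,
      mul_eq_push hPP, mul_eq_push hQQ, mul_eq_push hPQ, mul_eq_push hQP]
  -- diagonal norms
  have hl0 : (0:ℝ) < lam ⟨0, by omega⟩ := hlam_pos _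
  have hlm : (0:ℝ) < lam ⟨m, hm⟩ := hlam_pos _
  have hDSn : ‖DS‖ ≤ Real.sqrt (lam ⟨0, by omega⟩) := by
    rw [hDS_def]
    refine diag_norm_le _ _ (Real.sqrt_nonneg _) fun j => ?_
    rw [abs_of_nonneg (Real.sqrt_nonneg _)]
    exact Real.sqrt_le_sqrt (hlam_mono _ _ (by simp [Fin.le_def]))
  have hDBn : ‖DB‖ ≤ Real.sqrt (lam ⟨m, hm⟩) := by
    rw [hDB_def]
    refine diag_norm_le _ _ (Real.sqrt_nonneg _) fun j => ?_
    rw [abs_of_nonneg (Real.sqrt_nonneg _)]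
    exact Real.sqrt_le_sqrt (hlam_mono _ _ (by simp [Fin.le_def, embR]))
  -- rescaling facts
  have hninv : ((Real.sqrt n)⁻¹ : ℝ) * (Real.sqrt n)⁻¹ = (n : ℝ)⁻¹ := by
    rw [← mul_inv, Real.mul_self_sqrt (Nat.cast_nonneg n)]
  have hfacSB : (n : ℝ)⁻¹ • (ZSᵀ * ZB)
      = ((Real.sqrt n)⁻¹ • ZS)ᵀ * ((Real.sqrt n)⁻¹ • ZB) := by
    rw [Matrix.transpose_smul, Matrix.smul_mul, Matrix.mul_smul, smul_smul, hninv]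
  have hfacBS : (n : ℝ)⁻¹ • (ZBᵀ * ZS)
      = ((Real.sqrt n)⁻¹ • ZB)ᵀ * ((Real.sqrt n)⁻¹ • ZS) := by
    rw [Matrix.transpose_smul, Matrix.smul_mul, Matrix.mul_smul, smul_smul, hninv]
  have hfacBB : (n : ℝ)⁻¹ • (ZBᵀ * ZB)
      = ((Real.sqrt n)⁻¹ • ZB)ᵀ * ((Real.sqrt n)⁻¹ • ZB) := by
    rw [Matrix.transpose_smul, Matrix.smul_mul, Matrix.mul_smul, smul_smul, hninv]
  have hmidSB : ‖(n : ℝ)⁻¹ • (ZSᵀ * ZB)‖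
      ≤ ‖(Real.sqrt n)⁻¹ • ZS‖ * ‖(Real.sqrt n)⁻¹ • ZB‖ := by
    rw [hfacSB]
    refine (Matrix.l2_opNorm_mul _ _).trans ?_
    rw [my_norm_transpose]
  have hmidBS : ‖(n : ℝ)⁻¹ • (ZBᵀ * ZS)‖
      ≤ ‖(Real.sqrt n)⁻¹ • ZB‖ * ‖(Real.sqrt n)⁻¹ • ZS‖ := by
    rw [hfacBS]
    refine (Matrix.l2_opNorm_mul _ _).trans ?_
    rw [my_norm_transpose]
  have hmidBB : ‖(n : ℝ)⁻¹ • (ZBᵀ * ZB) - 1‖ ≤ ‖(Real.sqrt n)⁻¹ • ZB‖ ^ 2 + 1 := by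
    refine (norm_sub_le _ _).trans ?_
    have : ‖(n : ℝ)⁻¹ • (ZBᵀ * ZB)‖ = ‖(Real.sqrt n)⁻¹ • ZB‖ ^ 2 := by
      rw [hfacBB, ← Matrix.conjTranspose_eq_transpose_of_trivial,
        Matrix.l2_opNorm_conjTranspose_mul_self, sq]
    rw [this]
    exact add_le_add le_rfl my_norm_one_le
  -- contraction norms
  have hUn : ‖U‖ ≤ 1 := my_norm_contraction U hU'
  have hUTn : ‖Uᵀ‖ ≤ 1 := my_norm_contraction Uᵀ (by rw [Matrix.transpose_transpose]; exact hU)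
  have hPn : ‖P‖ ≤ 1 := my_norm_contraction P hPP
  have hPTn : ‖Pᵀ‖ ≤ 1 := by rw [my_norm_transpose]; exact hPn
  have hQn : ‖Q‖ ≤ 1 := my_norm_contraction Q hQQ
  have hQTn : ‖Qᵀ‖ ≤ 1 := by rw [my_norm_transpose]; exact hQn
  -- bound on the middle matrix
  have hblocks : ‖D * W * D‖
      ≤ lam ⟨0, by omega⟩ * ‖(n : ℝ)⁻¹ • (ZSᵀ * ZS) - 1‖
        + 2 * Real.sqrt (lam ⟨0, by omega⟩ * lam ⟨m, hm⟩)
          * ‖(Real.sqrt n)⁻¹ • ZS‖ * ‖(Real.sqrt n)⁻¹ • ZB‖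
        + lam ⟨m, hm⟩ * ‖(Real.sqrt n)⁻¹ • ZB‖ ^ 2 + lam ⟨m, hm⟩ := by
    have t1 : ‖P * (Pᵀ * (D * W * D) * P) * Pᵀ‖
        ≤ 1 * (Real.sqrt (lam ⟨0, by omega⟩) * ‖(n : ℝ)⁻¹ • (ZSᵀ * ZS) - 1‖
            * Real.sqrt (lam ⟨0, by omega⟩)) * 1 :=
      norm_triple_le _ _ _ hPn (by rw [hB11]; exact norm_triple_le _ _ _ hDSn le_rfl hDSn) hPTn
    have t2 : ‖P * (Pᵀ * (D * W * D) * Q) * Qᵀ‖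
        ≤ 1 * (Real.sqrt (lam ⟨0, by omega⟩)
            * (‖(Real.sqrt n)⁻¹ • ZS‖ * ‖(Real.sqrt n)⁻¹ • ZB‖)
            * Real.sqrt (lam ⟨m, hm⟩)) * 1 :=
      norm_triple_le _ _ _ hPn (by rw [hB12]; exact norm_triple_le _ _ _ hDSn hmidSB hDBn) hQTn
    have t3 : ‖Q * (Qᵀ * (D * W * D) * P) * Pᵀ‖
        ≤ 1 * (Real.sqrt (lam ⟨m, hm⟩)
            * (‖(Real.sqrt n)⁻¹ • ZB‖ * ‖(Real.sqrt n)⁻¹ • ZS‖)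
            * Real.sqrt (lam ⟨0, by omega⟩)) * 1 :=
      norm_triple_le _ _ _ hQn (by rw [hB21]; exact norm_triple_le _ _ _ hDBn hmidBS hDSn) hPTn
    have t4 : ‖Q * (Qᵀ * (D * W * D) * Q) * Qᵀ‖
        ≤ 1 * (Real.sqrt (lam ⟨m, hm⟩) * (‖(Real.sqrt n)⁻¹ • ZB‖ ^ 2 + 1)
            * Real.sqrt (lam ⟨m, hm⟩)) * 1 :=
      norm_triple_le _ _ _ hQn (by rw [hB22]; exact norm_triple_le _ _ _ hDBn hmidBB hDBn) hQTn
    have tri : ‖D * W * D‖ ≤ ‖P * (Pᵀ * (D * W * D) * P) * Pᵀ‖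
        + ‖P * (Pᵀ * (D * W * D) * Q) * Qᵀ‖ + ‖Q * (Qᵀ * (D * W * D) * P) * Pᵀ‖
        + ‖Q * (Qᵀ * (D * W * D) * Q) * Qᵀ‖ := by
      conv_lhs => rw [block_decomp hm.le (D * W * D)]
      rw [← hP_def, ← hQ_def]
      calc ‖_ + _ + _ + _‖ ≤ ‖_ + _ + _‖ + ‖_‖ := norm_add_le _ _
        _ ≤ (‖_ + _‖ + ‖_‖) + ‖_‖ := add_le_add_left (norm_add_le _ _) _
        _ ≤ ((‖_‖ + ‖_‖) + ‖_‖) + ‖_‖ :=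
            add_le_add_left (add_le_add_left (norm_add_le _ _) _) _
    have hs0 : Real.sqrt (lam ⟨0, by omega⟩) * Real.sqrt (lam ⟨0, by omega⟩)
        = lam ⟨0, by omega⟩ := Real.mul_self_sqrt hl0.le
    have hsm : Real.sqrt (lam ⟨m, hm⟩) * Real.sqrt (lam ⟨m, hm⟩)
        = lam ⟨m, hm⟩ := Real.mul_self_sqrt hlm.le
    have hsmul : Real.sqrt (lam ⟨0, by omega⟩ * lam ⟨m, hm⟩)
        = Real.sqrt (lam ⟨0, by omega⟩) * Real.sqrt (lam ⟨m, hm⟩) := Real.sqrt_mul hl0.le _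
    rw [hsmul]
    calc ‖D * W * D‖ ≤ _ := tri
      _ ≤ _ := add_le_add (add_le_add (add_le_add t1 t2) t3) t4
      _ = lam ⟨0, by omega⟩ * ‖(n : ℝ)⁻¹ • (ZSᵀ * ZS) - 1‖
          + 2 * (Real.sqrt (lam ⟨0, by omega⟩) * Real.sqrt (lam ⟨m, hm⟩))
            * ‖(Real.sqrt n)⁻¹ • ZS‖ * ‖(Real.sqrt n)⁻¹ • ZB‖
          + lam ⟨m, hm⟩ * ‖(Real.sqrt n)⁻¹ • ZB‖ ^ 2 + lam ⟨m, hm⟩ := by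
        linear_combination (‖(n : ℝ)⁻¹ • (ZSᵀ * ZS) - 1‖) * hs0
          + (‖(Real.sqrt n)⁻¹ • ZB‖ ^ 2 + 1) * hsm
  refine le_trans (norm_triple_le _ _ _ hUn hblocks hUTn) ?_
  rw [one_mul, mul_one]
end MainProof
end

section
/- Let Σ̂ = Σ_{j=1}^n λ̂ⱼP̂ⱼ and Σ = Σ_{k=1}^d λₖPₖ be spectral decompositions with rank-one orthogonal projectors, λ̂ₙ > 0, λₖ ≥ 0. Then Tr(Σ_{j=m+1}^n Σ_{k=1}^m (λₖ/λ̂ⱼ) P̂ⱼPₖ) ≤ (2m/λ̂ₙ) ‖Σ_{k=1}^m λₖ(Pₖ − P̂ₖ)‖, where ‖·‖ is the operator norm. -/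
open Matrix Finset

variable {d : ℕ}

lemma aux_trace_transpose_mul_self_nonneg (M : Matrix (Fin d) (Fin d) ℝ) :
    0 ≤ (Mᵀ * M).trace := by
  simp only [Matrix.trace, Matrix.diag, Matrix.mul_apply, Matrix.transpose_apply]
  exact Finset.sum_nonneg fun j _ => Finset.sum_nonneg fun i _ => mul_self_nonneg _

lemma aux_trace_proj_mul_proj_nonneg (Q R : Matrix (Fin d) (Fin d) ℝ)
    (hQs : Qᵀ = Q) (hQi : Q * Q = Q) (hRs : Rᵀ = R) (hRi : R * R = R) :
    0 ≤ (Q * R).trace := by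
  have h : (R * Q)ᵀ * (R * Q) = Q * R * Q := by
    rw [Matrix.transpose_mul, hQs, hRs, Matrix.mul_assoc, ← Matrix.mul_assoc R R Q, hRi]
    rw [← Matrix.mul_assoc]
  have h2 := aux_trace_transpose_mul_self_nonneg (R * Q)
  rwa [h, Matrix.trace_mul_cycle, hQi] at h2

lemma aux_quad_le (B : Matrix (Fin d) (Fin d) ℝ) (v : Fin d → ℝ) :
    v ⬝ᵥ (B *ᵥ v) ≤ opNorm B * (v ⬝ᵥ v) := by
  set x : EuclideanSpace ℝ (Fin d) := (WithLp.equiv 2 _).symm v with hx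
  set T := LinearMap.toContinuousLinearMap (Matrix.toEuclideanLin B) with hT
  have h1 : v ⬝ᵥ (B *ᵥ v) = inner ℝ x (T x) := by
    rw [dotProduct_comm]; rfl
  have h2 : v ⬝ᵥ v = @inner ℝ _ _ x x := by
    rfl
  rw [h1, h2, real_inner_self_eq_norm_sq]
  calc (inner ℝ x (T x) : ℝ) ≤ ‖x‖ * ‖T x‖ := real_inner_le_norm x (T x)
    _ ≤ ‖x‖ * (‖T‖ * ‖x‖) :=
        mul_le_mul_of_nonneg_left (T.le_opNorm x) (norm_nonneg x)
    _ = opNorm B * (‖x‖ * ‖x‖) := by rw [opNorm, ← hT]; ring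
    _ = opNorm B * ‖x‖ ^ 2 := by ring

lemma aux_trace_proj_mul_le (Q B : Matrix (Fin d) (Fin d) ℝ)
    (hQs : Qᵀ = Q) (hQi : Q * Q = Q) (hQt : Q.trace = 1) :
    (Q * B).trace ≤ opNorm B := by
  set M : Matrix (Fin d) (Fin d) ℝ := opNorm B • (1 : Matrix (Fin d) (Fin d) ℝ) - B with hM
  have key : 0 ≤ (Q * M * Q).trace := by
    have heq : (Q * M * Q).trace = ∑ j, (fun i => Q i j) ⬝ᵥ (M *ᵥ fun i => Q i j) := by
      simp only [Matrix.trace, Matrix.diag, Matrix.mul_apply, Matrix.mulVec, dotProduct,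
        Finset.sum_mul, Finset.mul_sum]
      refine Finset.sum_congr rfl fun j _ => ?_
      rw [Finset.sum_comm]
      refine Finset.sum_congr rfl fun l _ => Finset.sum_congr rfl fun i _ => ?_
      have hs : Q j l = Q l j := by conv_lhs => rw [← hQs, Matrix.transpose_apply]
      rw [hs]; ring
    rw [heq]
    refine Finset.sum_nonneg fun j _ => ?_
    have := aux_quad_le B (fun i => Q i j)
    simp only [hM, Matrix.sub_mulVec, Matrix.smul_mulVec, Matrix.one_mulVec,
      dotProduct_sub, dotProduct_smul, smul_eq_mul]
    linarith
  have h3 : (Q * M * Q).trace = opNorm B - (Q * B).trace := by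
    rw [Matrix.trace_mul_cycle, hQi, hM, Matrix.mul_sub,
      Matrix.mul_smul, Matrix.mul_one, Matrix.trace_sub, Matrix.trace_smul,
      smul_eq_mul, hQt, mul_one]
  linarith

lemma aux_opNorm_neg (A : Matrix (Fin d) (Fin d) ℝ) : opNorm (-A) = opNorm A := by
  rw [opNorm, opNorm, map_neg, map_neg, norm_neg]

/-- Cross-term trace bound:
`Tr(Σ_{m<j≤n} Σ_{k≤m} (λₖ/λ̂ⱼ) P̂ⱼPₖ) ≤ (2m/λ̂ₙ) ‖Σ_{k≤m} λₖ(Pₖ − P̂ₖ)‖`,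
for rank-one mutually orthogonal spectral projectors `P̂ⱼ` (of `Σ̂`) and `Pₖ`
(of `Σ`), with `λ̂₁ ≥ … ≥ λ̂ₙ > 0` and `λₖ ≥ 0`.
(0-based indexing: `λ̂ₙ` is `lamhat (n-1)`.) -/
theorem nonspiked_spiked_cross_trace_bound {d : ℕ} (n m : ℕ)
    (hn1 : 1 ≤ n) (hmn : m ≤ n) (hmd : m ≤ d)
    (P Phat : ℕ → Matrix (Fin d) (Fin d) ℝ) (lam lamhat : ℕ → ℝ)
    -- rank-one mutually orthogonal projectors :
    (hPsymm : ∀ j < d, (P j)ᵀ = P j)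
    (hPidem : ∀ j < d, P j * P j = P j)
    (hPorth : ∀ i < d, ∀ j < d, i ≠ j → P i * P j = 0)
    (hPrank : ∀ j < d, (P j).trace = 1)
    (hPhsymm : ∀ j < n, (Phat j)ᵀ = Phat j)
    (hPhidem : ∀ j < n, Phat j * Phat j = Phat j)
    (hPhorth : ∀ i < n, ∀ j < n, i ≠ j → Phat i * Phat j = 0)
    (hPhrank : ∀ j < n, (Phat j).trace = 1)
    -- eigenvalues :
    (hlam_nonneg : ∀ k < d, 0 ≤ lam k)
    (hlamhat_mono : ∀ i j, i ≤ j → j < n → lamhat j ≤ lamhat i)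
    (hlamhat_pos : ∀ j < n, 0 < lamhat j) :
    (∑ j ∈ Ico m n, ∑ k ∈ range m, (lam k / lamhat j) • (Phat j * P k)).trace
      ≤ (2 * m / lamhat (n - 1))
          * opNorm (∑ k ∈ range m, lam k • (P k - Phat k)) := by
  set A := ∑ k ∈ range m, lam k • (P k - Phat k) with hA
  have hexp : ∀ j, m ≤ j → j < n →
      Phat j * A = ∑ k ∈ range m, lam k • (Phat j * P k) := by
    intro j hj1 hj2
    rw [hA, Finset.mul_sum]
    refine Finset.sum_congr rfl fun k hk => ?_
    rw [Finset.mem_range] at hk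
    rw [Matrix.mul_smul, Matrix.mul_sub,
      hPhorth j hj2 k (lt_of_lt_of_le hk hmn) (by omega), sub_zero]
  have step1 : (∑ j ∈ Ico m n, ∑ k ∈ range m, (lam k / lamhat j) • (Phat j * P k)).trace
      = ∑ j ∈ Ico m n, (lamhat j)⁻¹ * (Phat j * A).trace := by
    rw [Matrix.trace_sum]
    refine Finset.sum_congr rfl fun j hj => ?_
    rw [Finset.mem_Ico] at hj
    rw [Matrix.trace_sum, hexp j hj.1 hj.2, Matrix.trace_sum, Finset.mul_sum]
    refine Finset.sum_congr rfl fun k hk => ?_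
    rw [Matrix.trace_smul, Matrix.trace_smul, smul_eq_mul, smul_eq_mul, div_eq_inv_mul]
    ring
  have tnn : ∀ j, m ≤ j → j < n → 0 ≤ (Phat j * A).trace := by
    intro j h1 h2
    rw [hexp j h1 h2, Matrix.trace_sum]
    refine Finset.sum_nonneg fun k hk => ?_
    rw [Finset.mem_range] at hk
    have hkd := lt_of_lt_of_le hk hmd
    rw [Matrix.trace_smul, smul_eq_mul]
    exact mul_nonneg (hlam_nonneg k hkd)
      (aux_trace_proj_mul_proj_nonneg _ _ (hPhsymm j h2) (hPhidem j h2)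
        (hPsymm k hkd) (hPidem k hkd))
  have hln : 0 < lamhat (n - 1) := hlamhat_pos (n - 1) (by omega)
  have step3 : ∑ j ∈ Ico m n, (lamhat j)⁻¹ * (Phat j * A).trace
      ≤ (lamhat (n - 1))⁻¹ * ∑ j ∈ Ico m n, (Phat j * A).trace := by
    rw [Finset.mul_sum]
    refine Finset.sum_le_sum fun j hj => ?_
    rw [Finset.mem_Ico] at hj
    have hle : lamhat (n - 1) ≤ lamhat j := hlamhat_mono j (n - 1) (by omega) (by omega)
    exact mul_le_mul_of_nonneg_right (inv_anti₀ hln hle) (tnn j hj.1 hj.2)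
  obtain ⟨R, hR⟩ : ∃ R, R = ∑ j ∈ range n, Phat j := ⟨_, rfl⟩
  have hRs : Rᵀ = R := by
    rw [hR, Matrix.transpose_sum]
    exact Finset.sum_congr rfl fun j hj => hPhsymm j (Finset.mem_range.mp hj)
  have hRmul : ∀ k < n, R * Phat k = Phat k := by
    intro k hk
    rw [hR, Finset.sum_mul, Finset.sum_eq_single k
      (fun i hi hik => hPhorth i (Finset.mem_range.mp hi) k hk hik)
      (fun h => absurd (Finset.mem_range.mpr hk) h)]
    exact hPhidem k hk
  have hRi : R * R = R := by
    calc R * R = R * ∑ j ∈ range n, Phat j := by rw [← hR]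
      _ = ∑ j ∈ range n, R * Phat j := Finset.mul_sum _ _ _
      _ = ∑ j ∈ range n, Phat j :=
          Finset.sum_congr rfl fun j hj => hRmul j (Finset.mem_range.mp hj)
      _ = R := hR.symm
  have h1Rs : (1 - R)ᵀ = 1 - R := by rw [Matrix.transpose_sub, Matrix.transpose_one, hRs]
  have h1Ri : (1 - R) * (1 - R) = 1 - R := by
    rw [mul_sub, mul_one, sub_mul, one_mul, hRi]
    abel
  have step4 : ∑ j ∈ range n, (Phat j * A).trace ≤ 0 := by
    have hsum : ∑ j ∈ range n, (Phat j * A).trace = (R * A).trace := by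
      rw [hR, Finset.sum_mul, Matrix.trace_sum]
    rw [hsum]
    have hRA : R * A = ∑ k ∈ range m, lam k • (R * P k - Phat k) := by
      rw [hA, Finset.mul_sum]
      refine Finset.sum_congr rfl fun k hk => ?_
      rw [Finset.mem_range] at hk
      rw [Matrix.mul_smul, Matrix.mul_sub, hRmul k (lt_of_lt_of_le hk hmn)]
    rw [hRA, Matrix.trace_sum]
    refine Finset.sum_nonpos fun k hk => ?_
    rw [Finset.mem_range] at hk
    have hkd := lt_of_lt_of_le hk hmd
    have hkn := lt_of_lt_of_le hk hmn
    rw [Matrix.trace_smul, smul_eq_mul, Matrix.trace_sub, hPhrank k hkn]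
    have h1 : (R * P k).trace ≤ 1 := by
      have h0 := aux_trace_proj_mul_proj_nonneg (1 - R) (P k) h1Rs h1Ri
        (hPsymm k hkd) (hPidem k hkd)
      rw [sub_mul, one_mul, Matrix.trace_sub, hPrank k hkd] at h0
      linarith
    have h2 := hlam_nonneg k hkd
    nlinarith
  have hop : 0 ≤ opNorm A := by rw [opNorm]; exact norm_nonneg _
  have step5 : ∀ j < m, -(Phat j * A).trace ≤ opNorm A := by
    intro j hj
    have hjn := lt_of_lt_of_le hj hmn
    have h := aux_trace_proj_mul_le (Phat j) (-A) (hPhsymm j hjn) (hPhidem j hjn)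
      (hPhrank j hjn)
    rwa [aux_opNorm_neg, mul_neg, Matrix.trace_neg] at h
  have hsplit : ∑ j ∈ range m, (Phat j * A).trace + ∑ j ∈ Ico m n, (Phat j * A).trace
      = ∑ j ∈ range n, (Phat j * A).trace := by
    rw [Finset.range_eq_Ico, Finset.range_eq_Ico]
    exact Finset.sum_Ico_consecutive (fun j => (Phat j * A).trace) (Nat.zero_le m) hmn
  have hneg : ∑ j ∈ range m, -(Phat j * A).trace ≤ m * opNorm A := by
    calc ∑ j ∈ range m, -(Phat j * A).trace ≤ ∑ _j ∈ range m, opNorm A :=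
          Finset.sum_le_sum fun j hj => step5 j (Finset.mem_range.mp hj)
      _ = m * opNorm A := by rw [Finset.sum_const, Finset.card_range, nsmul_eq_mul]
  have hIco_le : ∑ j ∈ Ico m n, (Phat j * A).trace ≤ m * opNorm A := by
    have hnegsum : ∑ j ∈ range m, -(Phat j * A).trace
        = -∑ j ∈ range m, (Phat j * A).trace := Finset.sum_neg_distrib _
    linarith
  rw [step1]
  have hc : 0 ≤ (m : ℝ) * ((lamhat (n - 1))⁻¹ * opNorm A) :=
    mul_nonneg (Nat.cast_nonneg m) (mul_nonneg (inv_nonneg.mpr hln.le) hop)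
  calc ∑ j ∈ Ico m n, (lamhat j)⁻¹ * (Phat j * A).trace
      ≤ (lamhat (n - 1))⁻¹ * ∑ j ∈ Ico m n, (Phat j * A).trace := step3
    _ ≤ (lamhat (n - 1))⁻¹ * (m * opNorm A) :=
        mul_le_mul_of_nonneg_left hIco_le (inv_nonneg.mpr hln.le)
    _ = (m : ℝ) * ((lamhat (n - 1))⁻¹ * opNorm A) := by ring
    _ ≤ 2 * m * ((lamhat (n - 1))⁻¹ * opNorm A) := by linarith
    _ = 2 * m / lamhat (n - 1) * opNorm A := by rw [div_eq_mul_inv]; ring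
end
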